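/- arXiv:1012.0175 — 10 statements merged into one kernel-verified Lean document; each statement's English description precedes it below -/
import Mathlib

section
/- For every integer j ≥ 0, the identity (t/(e^t − 1))^{j+1} · h_j(e^t − 1) = j!·(1 + (−1)^j · ∑_{n ≥ j+1} binom(n−1, j) · B_n · t^n / n!) holds in ℚ[[t]]; equivalently, in denominator-free form, (e^t − 1)^{j+1} · j!·(1 + (−1)^j ∑_{n ≥ j+1} binom(n−1,j) B_n t^n/n!) = t^{j+1} · h_j(e^t − 1). -/
/-- The polynomials `h_j`, defined by `h_0 = 1` and
`h_j = (1+X) * (j * h_{j-1} - X * h_{j-1}')`. -/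
noncomputable def hPoly : ℕ → Polynomial ℤ
  | 0 => 1
  | (j + 1) => (1 + Polynomial.X) *
      ((j + 1 : ℤ) • hPoly j - Polynomial.X * Polynomial.derivative (hPoly j))

/-- The power series `j! * (1 + (-1)^j * ∑_{n ≥ j+1} binom(n-1, j) * B_n * t^n / n!)`. -/
noncomputable def bernoulliSide (j : ℕ) : PowerSeries ℚ :=
  PowerSeries.mk fun n =>
    if n = 0 then (j.factorial : ℚ)
    else if j + 1 ≤ n then
      (j.factorial : ℚ) * (-1) ^ j * ((n - 1).choose j : ℚ) * _root_.bernoulli n /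
        (n.factorial : ℚ)
    else 0

open PowerSeries

lemma myDerivExp : PowerSeries.derivative ℚ (PowerSeries.exp ℚ) = PowerSeries.exp ℚ := by
  ext n
  show PowerSeries.coeff n (PowerSeries.derivative ℚ (PowerSeries.exp ℚ)) = _
  rw [PowerSeries.coeff_derivativeFun, PowerSeries.coeff_exp, PowerSeries.coeff_exp]
  simp [Nat.factorial_succ]
  field_simp

lemma deriv_aeval (p : Polynomial ℤ) (f : PowerSeries ℚ) :
    PowerSeries.derivative ℚ (Polynomial.aeval f p) =
      Polynomial.aeval f (Polynomial.derivative p) * PowerSeries.derivative ℚ f := by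
  induction p using Polynomial.induction_on with
  | C a => simp
  | add p q hp hq => simp [hp, hq]; ring
  | monomial n a h =>
      simp only [Polynomial.derivative_mul, Polynomial.derivative_C, map_mul, map_add, zero_mul,
        Polynomial.derivative_X_pow, map_pow, Polynomial.aeval_X, Polynomial.aeval_C] at *
      rw [Derivation.leibniz, Derivation.leibniz_pow]
      simp at *
      ring

lemma bern_zero : bernoulliSide 0 = bernoulliPowerSeries ℚ := by
  ext n
  cases n with
  | zero => simp [bernoulliSide, bernoulliPowerSeries]
  | succ k => simp [bernoulliSide, bernoulliPowerSeries, div_eq_mul_inv, mul_comm]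

lemma bern_rec (j : ℕ) : bernoulliSide (j+1) =
    ((j : ℚ)+1) • bernoulliSide j - X * PowerSeries.derivative ℚ (bernoulliSide j) := by
  ext n
  rw [map_sub]
  cases n with
  | zero =>
    rw [coeff_zero_X_mul]
    simp [bernoulliSide, Nat.factorial_succ]
  | succ k =>
    rw [coeff_succ_X_mul]
    show _ = _ - coeff k (derivative ℚ (bernoulliSide j))
    rw [coeff_derivativeFun, map_smul]
    simp only [bernoulliSide, coeff_mk, Nat.succ_ne_zero, if_false, smul_eq_mul,
      Nat.add_sub_cancel]
    rcases lt_trichotomy (k+1) (j+1) with h | h | h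
    · rw [if_neg (show ¬(j+1+1 ≤ k+1) by omega), if_neg (show ¬(j+1 ≤ k+1) by omega)]
      ring
    · have hk : k = j := by omega
      subst hk
      rw [if_neg (show ¬(k+1+1 ≤ k+1) by omega), if_pos (le_refl (k+1))]
      ring
    · rw [if_pos (show j+1+1 ≤ k+1 by omega), if_pos (show j+1 ≤ k+1 by omega)]
      have hkj : j ≤ k := by omega
      have key : (k.choose (j+1) : ℚ) * ((j:ℚ)+1) = (k.choose j : ℚ) * ((k:ℚ) - j) := by
        have h1 := Nat.choose_succ_right_eq k j
        have h2 : ((k - j : ℕ) : ℚ) = (k : ℚ) - j := by push_cast [hkj]; ring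
        calc (k.choose (j+1) : ℚ) * ((j:ℚ)+1) = ((k.choose (j+1) * (j+1) : ℕ) : ℚ) := by
              push_cast; ring
        _ = ((k.choose j * (k - j) : ℕ) : ℚ) := by rw [h1]
        _ = _ := by rw [Nat.cast_mul, h2]
      rw [Nat.factorial_succ j]
      push_cast
      linear_combination ((j.factorial : ℚ) * (-1)^(j+1) * _root_.bernoulli (k+1) /
        ((k+1).factorial : ℚ)) * key

/-- `(t/(e^t-1))^{j+1} h_j(e^t-1) = j!(1 + (-1)^j ∑_{n ≥ j+1} binom(n-1,j) B_n t^n/n!)`,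
in the denominator-free form
`(e^t-1)^{j+1} * j!(1 + ⋯) = t^{j+1} * h_j(e^t-1)`. -/
theorem bernoulli_identity (j : ℕ) :
    (PowerSeries.exp ℚ - 1) ^ (j + 1) * bernoulliSide j =
      (PowerSeries.X : PowerSeries ℚ) ^ (j + 1) *
        Polynomial.aeval (PowerSeries.exp ℚ - 1) (hPoly j) := by
  induction j with
  | zero =>
    rw [bern_zero, pow_one, pow_one, mul_comm, bernoulliPowerSeries_mul_exp_sub_one]
    simp [hPoly]
  | succ j ih =>
    set E : PowerSeries ℚ := exp ℚ - 1 with hEdef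
    set F : PowerSeries ℚ := bernoulliSide j with hF
    set H : PowerSeries ℚ := Polynomial.aeval E (hPoly j) with hH
    set G : PowerSeries ℚ := Polynomial.aeval E (Polynomial.derivative (hPoly j)) with hG
    set DF : PowerSeries ℚ := PowerSeries.derivative ℚ F with hDF
    have hE : PowerSeries.derivative ℚ E = 1 + E := by
      rw [hEdef, map_sub, myDerivExp, Derivation.map_one_eq_zero]; ring
    have h2 : ((j : ℚ⟦X⟧)+1) * (E ^ j * ((1+E) * F)) + E ^ (j+1) * DF
        = ((j : ℚ⟦X⟧)+1) * (X ^ j * H) + X ^ (j+1) * ((1+E) * G) := by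
      have key := congrArg (PowerSeries.derivative ℚ) ih
      rw [Derivation.leibniz, Derivation.leibniz, Derivation.leibniz_pow,
        Derivation.leibniz_pow, hE, deriv_aeval, hE, derivative_X] at key
      simp only [smul_eq_mul, nsmul_eq_mul, Nat.add_sub_cancel, ← hDF, ← hG, ← hH] at key
      push_cast at key ⊢
      linear_combination key
    have h3 : bernoulliSide (j+1) = ((j : ℚ⟦X⟧)+1) * F - X * DF := by
      rw [bern_rec j, ← hF, ← hDF, PowerSeries.smul_eq_C_mul, map_add, map_one, map_natCast]
    rw [h3]
    have h4 : (Polynomial.aeval E (hPoly (j+1)) : ℚ⟦X⟧)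
        = (1+E) * (((j : ℚ⟦X⟧)+1) * H - E * G) := by
      simp only [hPoly, map_mul, map_sub, map_add, map_one, map_natCast, Polynomial.aeval_X, map_smul,
        zsmul_eq_mul, map_intCast, Int.cast_add, Int.cast_natCast, Int.cast_one, ← hH, ← hG]
      try push_cast
      try ring
    rw [h4]
    linear_combination (((j : ℚ⟦X⟧)+1) * (E + (1+E) * X)) * ih - (X * E) * h2
end

section
/- For every integer j ≥ 1, letting D_j denote the ℚ-linear operator −t·(d/dt) + j on ℚ[[t]], one has D_j[ (t/(e^t − 1))^j · h_{j−1}(e^t − 1) ] = (t/(e^t − 1))^{j+1} · h_j(e^t − 1) in ℚ[[t]]. -/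
/-- The operator `D_j = -t (d/dt) + j`, sending `∑ cₙ tⁿ` to `∑ (j - n) cₙ tⁿ`. -/
noncomputable def Dop (j : ℕ) (f : PowerSeries ℚ) : PowerSeries ℚ :=
  PowerSeries.mk fun n => ((j : ℚ) - (n : ℚ)) * PowerSeries.coeff n f

open PowerSeries

lemma Dop_eq' (j : ℕ) (f : PowerSeries ℚ) :
    Dop j f = (j : ℚ⟦X⟧) * f - X * d⁄dX ℚ f := by
  ext n
  rw [Dop, coeff_mk, map_sub, ← map_natCast (C (R := ℚ)) j, coeff_C_mul]
  cases n with
  | zero => simp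
  | succ n =>
    rw [coeff_succ_X_mul, coeff_derivative]
    push_cast
    ring

lemma PS_deriv_exp : d⁄dX ℚ (exp ℚ) = exp ℚ := by
  ext n
  rw [coeff_derivative, coeff_exp, coeff_exp]
  simp only [Algebra.algebraMap_self, RingHom.id_apply]
  field_simp [Nat.factorial_succ]
  rw [Nat.factorial_succ]
  push_cast
  ring

lemma PS_deriv_aeval (E : ℚ⟦X⟧) (p : Polynomial ℤ) :
    d⁄dX ℚ (Polynomial.aeval E p) =
      Polynomial.aeval E (Polynomial.derivative p) * d⁄dX ℚ E := by
  induction p using Polynomial.induction_on with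
  | C a => simp
  | add p q hp hq => simp [hp, hq, add_mul]
  | monomial n a h =>
    have hc : d⁄dX ℚ ((a : ℚ⟦X⟧)) = 0 := by
      rw [← map_intCast (C (R := ℚ)) a, derivative_C]
    have e1 : (Polynomial.aeval E) (Polynomial.C a * Polynomial.X ^ (n + 1)) =
        (a : ℚ⟦X⟧) * E ^ (n + 1) := by simp
    have e2 : (Polynomial.aeval E)
        (Polynomial.derivative (Polynomial.C a * Polynomial.X ^ (n + 1))) =
        (a : ℚ⟦X⟧) * (((n : ℚ⟦X⟧) + 1) * E ^ n) := by
      simp [Polynomial.derivative_X_pow]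
    rw [e1, e2, Derivation.leibniz, Derivation.leibniz_pow, Nat.add_sub_cancel, hc]
    simp only [smul_eq_mul, nsmul_eq_mul]
    push_cast
    ring

lemma key {R : Type*} [CommRing R] (k : ℕ) (T dT E XX h h' : R)
    (hT : T * E = XX) (hdT : dT * E + T * (E + 1) = 1) :
    ((k : R) + 1) * (T ^ (k + 1) * h) -
        XX * (T ^ (k + 1) * (h' * (E + 1)) + h * (((k : R) + 1) * T ^ k * dT)) =
      T ^ (k + 1 + 1) * ((1 + E) * (((k : R) + 1) * h - E * h')) := by
  linear_combination (T ^ (k + 1) * (h' * (E + 1)) + h * (((k : R) + 1) * T ^ k * dT)) * hT +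
    (-((k : R) + 1) * T ^ (k + 1) * h) * hdT

/-- For `j ≥ 1`, `D_j[(t/(e^t-1))^j h_{j-1}(e^t-1)] = (t/(e^t-1))^{j+1} h_j(e^t-1)`.
Here `T` denotes the power series `t/(e^t-1)`, i.e. the unique power series with
`T * (e^t - 1) = t`. -/
theorem Dop_hPoly_step (j : ℕ) (hj : 1 ≤ j) (T : PowerSeries ℚ)
    (hT : T * (PowerSeries.exp ℚ - 1) = PowerSeries.X) :
    Dop j (T ^ j * Polynomial.aeval (PowerSeries.exp ℚ - 1) (hPoly (j - 1))) =
      T ^ (j + 1) * Polynomial.aeval (PowerSeries.exp ℚ - 1) (hPoly j) := by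
  obtain ⟨k, rfl⟩ : ∃ k, j = k + 1 := ⟨j - 1, (Nat.succ_pred_eq_of_pos hj).symm⟩
  have hE : d⁄dX ℚ (exp ℚ - 1) = exp ℚ := by
    rw [map_sub, PS_deriv_exp, Derivation.map_one_eq_zero, sub_zero]
  have hdT : d⁄dX ℚ T * (exp ℚ - 1) + T * ((exp ℚ - 1) + 1) = 1 := by
    have h2 := congrArg (d⁄dX ℚ) hT
    rw [Derivation.leibniz, hE, derivative_X, smul_eq_mul, smul_eq_mul] at h2
    linear_combination h2
  have hsimp : (Polynomial.aeval (exp ℚ - 1)) (hPoly (k + 1)) =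
      (1 + (exp ℚ - 1)) * (((k : ℚ⟦X⟧) + 1) *
        Polynomial.aeval (exp ℚ - 1) (hPoly k) -
        (exp ℚ - 1) * Polynomial.aeval (exp ℚ - 1) (Polynomial.derivative (hPoly k))) := by
    rw [hPoly, map_mul, map_add, map_one, Polynomial.aeval_X, map_sub, map_mul,
      Polynomial.aeval_X, map_zsmul, zsmul_eq_mul]
    push_cast
    ring
  have hD : d⁄dX ℚ (T ^ (k + 1) * Polynomial.aeval (exp ℚ - 1) (hPoly k)) =
      T ^ (k + 1) * (Polynomial.aeval (exp ℚ - 1) (Polynomial.derivative (hPoly k)) *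
        ((exp ℚ - 1) + 1)) +
      Polynomial.aeval (exp ℚ - 1) (hPoly k) * (((k : ℚ⟦X⟧) + 1) * T ^ k * d⁄dX ℚ T) := by
    rw [Derivation.leibniz, Derivation.leibniz_pow, PS_deriv_aeval, hE, Nat.add_sub_cancel]
    simp only [smul_eq_mul, nsmul_eq_mul]
    push_cast
    ring
  rw [Nat.add_sub_cancel, Dop_eq', hsimp, hD]
  push_cast
  exact key k T (d⁄dX ℚ T) (exp ℚ - 1) X _ _ hT hdT
end

section
/- For every integer j ≥ 1, letting D_j denote the ℚ-linear operator −t·(d/dt) + j on ℚ[[t]], one has D_j[ (j−1)!·(1 + (−1)^{j−1} ∑_{n ≥ j} binom(n−1, j−1) B_n t^n/n!) ] = j!·(1 + (−1)^j ∑_{n ≥ j+1} binom(n−1, j) B_n t^n/n!) in ℚ[[t]]. -/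
/-- For `j ≥ 1`,
`D_j[(j-1)!(1 + (-1)^{j-1} ∑_{n ≥ j} binom(n-1, j-1) Bₙ tⁿ/n!)]
  = j!(1 + (-1)^j ∑_{n ≥ j+1} binom(n-1, j) Bₙ tⁿ/n!)`. -/
theorem Dop_bernoulliSide_step (j : ℕ) (hj : 1 ≤ j) :
    Dop j (bernoulliSide (j - 1)) = bernoulliSide j := by
  obtain ⟨k, rfl⟩ : ∃ k, j = k + 1 := ⟨j - 1, (Nat.succ_pred_eq_of_pos hj).symm⟩
  ext n
  simp only [Dop, bernoulliSide, PowerSeries.coeff_mk, Nat.add_sub_cancel]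
  by_cases h0 : n = 0
  · subst h0
    simp [Nat.factorial_succ]
  · simp only [h0, if_false]
    by_cases h2 : k + 1 + 1 ≤ n
    · have h1 : k + 1 ≤ n := le_trans (by omega) h2
      simp only [h1, h2, if_true]
      have hch : ((n - 1).choose (k + 1) : ℚ) * (k + 1) =
          ((n - 1).choose k : ℚ) * ((n : ℚ) - (k + 1)) := by
        have := Nat.choose_succ_right_eq (n - 1) k
        have hsub : n - 1 - k = n - (k + 1) := by omega
        rw [hsub] at this
        have := congrArg (Nat.cast (R := ℚ)) this
        push_cast [Nat.cast_sub (by omega : k + 1 ≤ n)] at this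
        linarith [this]
      push_cast [Nat.factorial_succ]
      linear_combination ((-1 : ℚ) ^ k * k.factorial * bernoulli n / n.factorial) * hch
    · by_cases h1 : k + 1 ≤ n
      · have hn : n = k + 1 := by omega
        simp [h1, h2, hn]
      · simp [h1, h2]
end

section
/- Let p be a prime, let k ≥ 2 be an integer, and let c ≥ 1 be an integer with p ∤ c. Set Q = (1+X)^c − 1, regarded as an element of ℤ_p[[X]]. Then X^{k−1}·Q^{k−1} divides c^{k−1}·X^{k−1}·h_{k−2}(Q) − Q^{k−1}·h_{k−2}(X) in ℤ_p[[X]]. (This expresses that (χ(γ)^{k−1}γ − 1)(π^{1−k} h_{k−2}(π)) lies in A⁺_{ℚ_p} = ℤ_p[[π]] for γ ∈ Γ with χ(γ) = c, where γ acts by π ↦ (1+π)^{χ(γ)} − 1.) -/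
open PowerSeries

section Aux

variable {p : ℕ} [Fact p.Prime]

private noncomputable abbrev Dd (p : ℕ) [Fact p.Prime] :
    Derivation ℤ_[p] (PowerSeries ℤ_[p]) (PowerSeries ℤ_[p]) := PowerSeries.derivative ℤ_[p]

private lemma Dd_aeval (x : PowerSeries ℤ_[p]) (f : Polynomial ℤ) :
    Dd p (Polynomial.aeval x f) = Polynomial.aeval x (Polynomial.derivative f) * Dd p x := by
  have h := Derivation.map_aeval ((Dd p).restrictScalars ℤ) f x
  rw [Derivation.restrictScalars_apply, Derivation.restrictScalars_apply, smul_eq_mul] at h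
  exact h

private lemma step_abstract {R : Type*} [CommRing R] (j : ℕ) (x q dq da a a' b b' A g : R)
    (hA : g^(j+1)*x^(j+1)*a - q^(j+1)*b = x^(j+1)*q^(j+1)*A)
    (hQ : (1+x)*dq = g*(1+q))
    (hDA : g^(j+1)*(((j:R)+1)*x^j*a + x^(j+1)*(a'*dq)) -
        (((j:R)+1)*(q^j*dq)*b + q^(j+1)*b') =
      x^(j+1)*q^(j+1)*da + A*(x^(j+1)*(((j:R)+1)*(q^j*dq)) + q^(j+1)*(((j:R)+1)*x^j))) :
    g^(j+1+1)*x^(j+1+1)*((1+q)*(((j:R)+1)*a - q*a')) -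
      q^(j+1+1)*((1+x)*(((j:R)+1)*b - x*b')) = x^(j+1+1)*q^(j+1+1)*(-((1+x)*da)) := by
  linear_combination (-(x*q*(1+x)))*hDA + (((j:R)+1)*((1+x)*q + g*x*(1+q)))*hA +
    (g^(j+1)*x^(j+1)*x*q*a' - ((j:R)+1)*x*q^(j+1)*b - ((j:R)+1)*x^(j+1)*x*q^(j+1)*A)*hQ

private lemma aeval_hPoly_succ (j : ℕ) (x : PowerSeries ℤ_[p]) :
    Polynomial.aeval x (hPoly (j+1)) =
      (1 + x) * (((j : PowerSeries ℤ_[p]) + 1) * Polynomial.aeval x (hPoly j)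
        - x * Polynomial.aeval x (Polynomial.derivative (hPoly j))) := by
  simp only [hPoly, map_mul, map_sub, map_add, map_one, Polynomial.aeval_X, zsmul_eq_mul,
    map_intCast]
  push_cast
  ring

private lemma key_aux (c : ℕ) (hcu : IsUnit (c : ℤ_[p])) (Q R : PowerSeries ℤ_[p])
    (hQ : (1 + X) * Dd p Q = (c : PowerSeries ℤ_[p]) * (1 + Q))
    (hR : Q = X * R) (hRc : PowerSeries.constantCoeff (R := ℤ_[p]) R = (c : ℤ_[p])) (j : ℕ) :
    (X : PowerSeries ℤ_[p]) ^ (j+1) * Q ^ (j+1) ∣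
      (c : PowerSeries ℤ_[p]) ^ (j+1) * X ^ (j+1) * Polynomial.aeval Q (hPoly j) -
        Q ^ (j+1) * Polynomial.aeval (X : PowerSeries ℤ_[p]) (hPoly j) := by
  induction j with
  | zero =>
      obtain ⟨S, hS⟩ : (X : PowerSeries ℤ_[p]) ∣ ((c : PowerSeries ℤ_[p]) - R) := by
        rw [X_dvd_iff, map_sub, hRc, map_natCast, sub_self]
      have hRu : IsUnit R := by
        rw [PowerSeries.isUnit_iff_constantCoeff, hRc]; exact hcu
      have hru : R * ↑hRu.unit⁻¹ = 1 := hRu.mul_val_inv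
      refine ⟨↑hRu.unit⁻¹ * S, ?_⟩
      simp only [hPoly, map_one, mul_one, zero_add, pow_one, hR]
      linear_combination X * hS - X * X * S * hru
  | succ j ih =>
      obtain ⟨A, hA⟩ := ih
      refine ⟨-((1 + X) * Dd p A), ?_⟩
      have e1 : Dd p (Polynomial.aeval Q (hPoly j)) =
          Polynomial.aeval Q (Polynomial.derivative (hPoly j)) * Dd p Q := Dd_aeval Q (hPoly j)
      have e2 : Dd p (Polynomial.aeval (X : PowerSeries ℤ_[p]) (hPoly j)) =
          Polynomial.aeval (X : PowerSeries ℤ_[p]) (Polynomial.derivative (hPoly j)) := by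
        have h := Dd_aeval (X : PowerSeries ℤ_[p]) (hPoly j)
        simpa using h
      have hDA := congrArg (fun f => Dd p f) hA
      simp only [map_sub, Derivation.leibniz, Derivation.leibniz_pow, Derivation.map_natCast,
        derivative_X, Nat.add_sub_cancel, smul_eq_mul, nsmul_eq_mul, mul_one, mul_zero, zero_mul,
        add_zero, zero_add, e1, e2] at hDA
      push_cast at hDA
      rw [aeval_hPoly_succ j Q, aeval_hPoly_succ j X]
      have key := step_abstract j (X : PowerSeries ℤ_[p]) Q (Dd p Q) (Dd p A)
        (Polynomial.aeval Q (hPoly j)) (Polynomial.aeval Q (Polynomial.derivative (hPoly j)))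
        (Polynomial.aeval (X : PowerSeries ℤ_[p]) (hPoly j))
        (Polynomial.aeval (X : PowerSeries ℤ_[p]) (Polynomial.derivative (hPoly j)))
        A (c : PowerSeries ℤ_[p]) hA hQ (by linear_combination hDA)
      linear_combination key

private lemma hQ_key (c : ℕ) (hc : 1 ≤ c) :
    (1 + X) * Dd p ((1 + X : PowerSeries ℤ_[p])^c - 1)
      = (c : PowerSeries ℤ_[p]) * (1 + ((1+X:PowerSeries ℤ_[p])^c - 1)) := by
  rw [map_sub, Derivation.leibniz_pow]
  simp only [Derivation.map_one_eq_zero, sub_zero, map_add, derivative_X, add_zero, smul_eq_mul,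
    nsmul_eq_mul, mul_one]
  rw [add_sub_cancel]
  simp only [zero_add, mul_one]
  rw [mul_left_comm, ← pow_succ', Nat.sub_add_cancel hc]

private lemma key_dvd (c : ℕ) (hc : 1 ≤ c) (hpc : ¬ (p ∣ c)) (j : ℕ) :
    (PowerSeries.X : PowerSeries ℤ_[p]) ^ (j+1) *
        ((1 + PowerSeries.X : PowerSeries ℤ_[p]) ^ c - 1) ^ (j+1) ∣
      (c : PowerSeries ℤ_[p]) ^ (j+1) * (PowerSeries.X : PowerSeries ℤ_[p]) ^ (j+1) *
          Polynomial.aeval ((1 + PowerSeries.X : PowerSeries ℤ_[p]) ^ c - 1) (hPoly j) -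
        ((1 + PowerSeries.X : PowerSeries ℤ_[p]) ^ c - 1) ^ (j+1) *
          Polynomial.aeval (PowerSeries.X : PowerSeries ℤ_[p]) (hPoly j) := by
  have hcu : IsUnit (c : ℤ_[p]) := by
    by_contra h
    rw [PadicInt.not_isUnit_iff] at h
    have h2 : ‖((c : ℤ) : ℤ_[p])‖ < 1 := by exact_mod_cast h
    have := (PadicInt.norm_int_lt_one_iff_dvd (c : ℤ)).mp h2
    exact hpc (Int.ofNat_dvd.mp this)
  have hQ := hQ_key (p := p) c hc
  have hQ0 : PowerSeries.constantCoeff (R := ℤ_[p]) ((1 + X : PowerSeries ℤ_[p])^c - 1) = 0 := by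
    simp
  obtain ⟨R, hR⟩ : (X : PowerSeries ℤ_[p]) ∣ ((1 + X : PowerSeries ℤ_[p])^c - 1) :=
    X_dvd_iff.mpr hQ0
  have hRc : PowerSeries.constantCoeff (R := ℤ_[p]) R = (c : ℤ_[p]) := by
    have h1 := congrArg (fun f => PowerSeries.constantCoeff (R := ℤ_[p]) (Dd p f)) hR
    simp only [Derivation.leibniz, smul_eq_mul, derivative_X, mul_one, map_add, map_mul,
      PowerSeries.constantCoeff_X, zero_mul, zero_add] at h1
    have h2 := congrArg (PowerSeries.constantCoeff (R := ℤ_[p])) hQ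
    simp only [map_mul, map_add, map_one, PowerSeries.constantCoeff_X, add_zero, one_mul,
      hQ0, map_natCast, mul_one] at h2
    rw [← h1, h2]
  exact key_aux c hcu _ R hQ hR hRc j

end Aux

/-- With `Q = (1+X)^c - 1 ∈ ℤ_p[[X]]` (for `c ≥ 1` prime to `p`),
`X^{k-1} Q^{k-1}` divides `c^{k-1} X^{k-1} h_{k-2}(Q) - Q^{k-1} h_{k-2}(X)`;
this expresses that `(χ(γ)^{k-1} γ - 1)(π^{1-k} h_{k-2}(π)) ∈ ℤ_p[[π]]`. -/
theorem gamma_action_integral (p : ℕ) [Fact p.Prime] (k : ℕ) (hk : 2 ≤ k)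
    (c : ℕ) (hc : 1 ≤ c) (hpc : ¬ (p ∣ c)) :
    (PowerSeries.X : PowerSeries ℤ_[p]) ^ (k - 1) *
        ((1 + PowerSeries.X : PowerSeries ℤ_[p]) ^ c - 1) ^ (k - 1) ∣
      (c : PowerSeries ℤ_[p]) ^ (k - 1) * (PowerSeries.X : PowerSeries ℤ_[p]) ^ (k - 1) *
          Polynomial.aeval ((1 + PowerSeries.X : PowerSeries ℤ_[p]) ^ c - 1) (hPoly (k - 2)) -
        ((1 + PowerSeries.X : PowerSeries ℤ_[p]) ^ c - 1) ^ (k - 1) *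
          Polynomial.aeval (PowerSeries.X : PowerSeries ℤ_[p]) (hPoly (k - 2)) := by
  have h1 : k - 1 = (k - 2) + 1 := by omega
  rw [h1]
  exact key_dvd c hc hpc (k - 2)
end

section
/- Let p ≥ 3 be a prime, let k be an integer with 2 ≤ k ≤ p−1, and let c ≥ 1 be an integer with p ∤ c. Set Q = (1+X)^c − 1 ∈ ℤ_p[[X]] and let δ_k = (−1)^k · B_{k−1}/(k−1), which is a p-integral rational number and hence defines an element of ℤ_p. Then c^{k−1}·X^{k−1}·h_{k−2}(Q) − Q^{k−1}·h_{k−2}(X) − (c^{k−1} − 1)·δ_k·X^{k−1}·Q^{k−1} lies in X^k·Q^{k−1}·ℤ_p[[X]]. (This expresses that (χ(γ)^{k−1}γ − 1)(x_k) ∈ π·A⁺_{ℚ_p}, where x_k = π^{1−k}h_{k−2}(π) − δ_k and γ ∈ Γ satisfies χ(γ) = c.) -/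
open PowerSeries Finset


open Finset

variable {p : ℕ} [hp : Fact p.Prime]

-- sum of m-th powers over range p is divisible by p when m < p-1, m could be 0? m=0: sum = p ✓ also divisible!
lemma sum_pow_dvd (m : ℕ) (hm : m < p - 1) : p ∣ ∑ k ∈ range p, k ^ m := by
  have h0 : ((∑ k ∈ range p, k ^ m : ℕ) : ZMod p) = 0 := by
    push_cast
    have : ∑ k ∈ range p, (k : ZMod p) ^ m = ∑ x : ZMod p, x ^ m := by
      refine Finset.sum_nbij' (fun i => (i : ZMod p)) (fun x => x.val) ?_ ?_ ?_ ?_ ?_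
      · intro a _; exact Finset.mem_univ _
      · intro x _; exact Finset.mem_range.2 (ZMod.val_lt x)
      · intro a ha; exact ZMod.val_cast_of_lt (Finset.mem_range.1 ha)
      · intro x _; exact ZMod.natCast_zmod_val x
      · intro a _; rfl
    rw [this]
    have := FiniteField.sum_pow_lt_card_sub_one (K := ZMod p) m (by rwa [ZMod.card])
    simpa using this
  exact (ZMod.natCast_eq_zero_iff _ _).1 h0

lemma norm_sum_le_one {ι : Type*} (s : Finset ι) (f : ι → ℚ_[p])
    (h : ∀ i ∈ s, ‖f i‖ ≤ 1) : ‖∑ i ∈ s, f i‖ ≤ 1 := by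
  classical
  induction s using Finset.induction_on with
  | empty => simp
  | insert a s hx ih =>
    rw [Finset.sum_insert hx]
    refine le_trans (Padic.nonarchimedean _ _) (max_le (h a (mem_insert_self a s))
      (ih fun i hi => h i (mem_insert_of_mem hi)))

lemma norm_natCast_le_one (n : ℕ) : ‖(n : ℚ_[p])‖ ≤ 1 := by
  exact_mod_cast Padic.norm_int_le_one (n : ℤ)

lemma norm_natCast_eq_one {n : ℕ} (h0 : 0 < n) (hn : n < p) : ‖(n : ℚ_[p])‖ = 1 := by
  refine le_antisymm (norm_natCast_le_one n) (not_lt.1 fun hlt => ?_)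
  have hdvd : (p : ℤ) ∣ (n : ℤ) := Padic.norm_intCast_lt_one_iff.1 (by exact_mod_cast hlt)
  have : p ∣ n := by exact_mod_cast hdvd
  exact absurd hn (not_lt.2 (Nat.le_of_dvd h0 this))

lemma bernoulli_padic_integral (hp3 : 3 ≤ p) : ∀ m : ℕ, m ≤ p - 2 →
    ‖((bernoulli m : ℚ) : ℚ_[p])‖ ≤ 1 := by
  intro m
  induction m using Nat.strong_induction_on with
  | _ m ih =>
    intro hm
    rcases Nat.eq_zero_or_pos m with rfl | hm0
    · simp
    -- Faulhaber
    have hF := sum_range_pow p m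
    rw [Finset.sum_range_succ] at hF
    have hchoose : ((m + 1).choose m : ℚ) = (m + 1 : ℚ) := by
      rw [Nat.choose_succ_self_right]; push_cast; ring
    have hm1 : ((m : ℚ) + 1) ≠ 0 := by positivity
    have hlast : bernoulli m * ((m + 1).choose m) * (p : ℚ) ^ (m + 1 - m) / (m + 1)
        = bernoulli m * p := by
      rw [hchoose, Nat.add_sub_cancel_left, pow_one]
      field_simp
    rw [hlast] at hF
    -- solve for bernoulli m
    have hp0 : (p : ℚ) ≠ 0 := by positivity
    have hber : (bernoulli m : ℚ) = (∑ k ∈ range p, (k : ℚ) ^ m) / p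
        - ∑ i ∈ range m, bernoulli i * ((m + 1).choose i) * (p : ℚ) ^ (m - i) / (m + 1) := by
      have key : ∀ i ∈ range m, bernoulli i * ((m + 1).choose i) * (p:ℚ) ^ (m + 1 - i) / (m + 1)
          = (bernoulli i * ((m + 1).choose i) * (p:ℚ) ^ (m - i) / (m + 1)) * p := by
        intro i hi
        have hile : i ≤ m := le_of_lt (Finset.mem_range.1 hi)
        have : m + 1 - i = (m - i) + 1 := by omega
        rw [this, pow_succ]
        ring
      rw [Finset.sum_congr rfl key, ← Finset.sum_mul] at hF
      rw [hF]
      field_simp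
      ring
    rw [hber]
    have h1 : ‖((((∑ k ∈ range p, (k:ℚ)^m) / p : ℚ)) : ℚ_[p])‖ ≤ 1 := by
      obtain ⟨t, ht⟩ := sum_pow_dvd (p := p) m (by omega)
      have hsum : (∑ k ∈ range p, (k:ℚ)^m) = ((∑ k ∈ range p, k ^ m : ℕ) : ℚ) := by push_cast; rfl
      rw [hsum, ht]
      push_cast [hp0]
      rw [mul_comm, mul_div_assoc, div_self (by exact_mod_cast hp0), mul_one]
      exact norm_natCast_le_one t
    -- remaining: the sum term
    rw [Rat.cast_sub, sub_eq_add_neg]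
    refine le_trans (Padic.nonarchimedean _ _) (max_le h1 ?_)
    rw [norm_neg, Rat.cast_sum]
    refine norm_sum_le_one _ _ ?_
    intro i hi
    have hilt : i < m := Finset.mem_range.1 hi
    have hbi : ‖((bernoulli i : ℚ) : ℚ_[p])‖ ≤ 1 := ih i hilt (by omega)
    have hchoosei : ‖(((m + 1).choose i : ℚ) : ℚ_[p])‖ ≤ 1 := by
      push_cast; exact norm_natCast_le_one _
    have hpow : ‖(((p : ℚ) ^ (m - i) : ℚ) : ℚ_[p])‖ ≤ 1 := by
      push_cast; exact (norm_pow _ _).le.trans (pow_le_one₀ (norm_nonneg _) (norm_natCast_le_one p))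
    have hminv : ‖((((m : ℚ) + 1)⁻¹ : ℚ) : ℚ_[p])‖ = 1 := by
      push_cast
      rw [norm_inv]
      have : ((m : ℚ_[p]) + 1) = ((m + 1 : ℕ) : ℚ_[p]) := by push_cast; ring
      rw [this, norm_natCast_eq_one (by omega) (by omega)]
      norm_num
    calc ‖((bernoulli i * ((m + 1).choose i) * (p:ℚ) ^ (m - i) / ((m:ℚ) + 1) : ℚ) : ℚ_[p])‖
        = ‖((bernoulli i : ℚ) : ℚ_[p])‖ * ‖(((m + 1).choose i : ℚ) : ℚ_[p])‖ *
          ‖(((p : ℚ) ^ (m - i) : ℚ) : ℚ_[p])‖ * ‖((((m : ℚ) + 1)⁻¹ : ℚ) : ℚ_[p])‖ := by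
          rw [div_eq_mul_inv]; push_cast; rw [norm_mul, norm_mul, norm_mul]
      _ ≤ 1 := by rw [hminv, mul_one]; exact mul_le_one₀ (mul_le_one₀ hbi (norm_nonneg _) hchoosei) (norm_nonneg _) hpow

section Binomial
variable {A : Type*} [CommRing A]

lemma one_add_X_pow_eq (c : ℕ) :
    ((1 + X : A⟦X⟧)) ^ c = mk fun i => (c.choose i : A) := by
  ext n
  rw [add_comm (1 : A⟦X⟧) X, add_pow]
  rw [map_sum, coeff_mk]
  have : ∀ m ∈ range (c + 1), (coeff n) (X ^ m * 1 ^ (c - m) * (c.choose m : A⟦X⟧))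
      = if n = m then (c.choose m : A) else 0 := by
    intro m _
    rw [one_pow, mul_one]
    have : ((c.choose m : ℕ) : A⟦X⟧) = C ((c.choose m : ℕ) : A) :=
      (map_natCast (C (R := A)) (c.choose m)).symm
    rw [this, mul_comm, coeff_C_mul, coeff_X_pow]
    simp [mul_comm]
  rw [Finset.sum_congr rfl this, Finset.sum_ite_eq (range (c+1)) n (fun m => (c.choose m : A))]
  split_ifs with h
  · rfl
  · rw [Finset.mem_range, not_lt] at h
    rw [Nat.choose_eq_zero_of_lt (by omega)]
    simp

/-- `R` series: `Q = X * R`. -/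
noncomputable def Rser (A : Type*) [CommRing A] (c : ℕ) : A⟦X⟧ := mk fun i => (c.choose (i+1) : A)

/-- `S` series : `c•X - Q = X^2 * S`. -/
noncomputable def Sser (A : Type*) [CommRing A] (c : ℕ) : A⟦X⟧ := mk fun i => -((c.choose (i+2) : A))

lemma X_mul_Rser (c : ℕ) : (X : A⟦X⟧) * Rser A c = (1 + X) ^ c - 1 := by
  rw [one_add_X_pow_eq]
  ext n
  cases n with
  | zero => simp [Rser]
  | succ n => simp [coeff_succ_X_mul, Rser, coeff_one]

lemma X_sq_mul_Sser (c : ℕ) : (X : A⟦X⟧) ^ 2 * Sser A c = (c : A⟦X⟧) * X - ((1 + X) ^ c - 1) := by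
  have hc : ((c : ℕ) : A⟦X⟧) = C ((c : ℕ) : A) := (map_natCast (C (R := A)) c).symm
  rw [one_add_X_pow_eq, hc]
  ext n
  rw [map_sub, map_sub, coeff_C_mul, coeff_X, coeff_one]
  match n with
  | 0 => simp [Sser, coeff_X_pow_mul']
  | 1 => simp [Sser, coeff_X_pow_mul', Nat.choose_one_right]
  | (n+2) =>
    rw [coeff_X_pow_mul]
    simp [Sser]

end Binomial

namespace GammaAux

open Function

/-- The derivation `(1+X) d/dX` on `ℚ⟦X⟧`. -/
noncomputable def DD : Derivation ℚ ℚ⟦X⟧ ℚ⟦X⟧ := ((1 + X : ℚ⟦X⟧)) • d⁄dX ℚ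

lemma DD_apply (f : ℚ⟦X⟧) : DD f = (1 + X) * d⁄dX ℚ f := by
  simp [DD, Derivation.smul_apply, smul_eq_mul]

lemma DD_X : DD X = 1 + X := by
  rw [DD_apply, derivative_X, mul_one]

/-- Iterated Leibniz rule for `DD`. -/
lemma DD_iterate_mul (n : ℕ) (f g : ℚ⟦X⟧) :
    DD^[n] (f * g) =
      ∑ k ∈ range (n + 1), (n.choose k) • (DD^[n - k] f * DD^[k] g) := by
  induction n with
  | zero => simp
  | succ n IH =>
    calc
      DD^[n + 1] (f * g) =
          DD (∑ k ∈ range n.succ, n.choose k • (DD^[n - k] f * DD^[k] g)) := by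
        rw [Function.iterate_succ_apply', IH]
      _ = (∑ k ∈ range n.succ, n.choose k • (DD^[n - k + 1] f * DD^[k] g)) +
          ∑ k ∈ range n.succ, n.choose k • (DD^[n - k] f * DD^[k + 1] g) := by
        rw [map_sum]
        rw [← sum_add_distrib]
        refine Finset.sum_congr rfl fun k _ => ?_
        rw [DD.map_smul_of_tower (n.choose k), DD.leibniz]
        simp only [Function.iterate_succ_apply', smul_eq_mul, smul_add, nsmul_eq_mul]
        ring
      _ = (∑ k ∈ range n.succ,
                n.choose k.succ • (DD^[n - k] f * DD^[k + 1] g)) +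
              1 • (DD^[n + 1] f * DD^[0] g) +
            ∑ k ∈ range n.succ, n.choose k • (DD^[n - k] f * DD^[k + 1] g) := ?_
      _ = ((∑ k ∈ range n.succ, n.choose k • (DD^[n - k] f * DD^[k + 1] g)) +
              ∑ k ∈ range n.succ,
                n.choose k.succ • (DD^[n - k] f * DD^[k + 1] g)) +
            1 • (DD^[n + 1] f * DD^[0] g) := by
        rw [add_comm, add_assoc]
      _ = (∑ i ∈ range n.succ,
              (n + 1).choose (i + 1) • (DD^[n + 1 - (i + 1)] f * DD^[i + 1] g)) +
            1 • (DD^[n + 1] f * DD^[0] g) := by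
        simp_rw [Nat.choose_succ_succ, Nat.succ_sub_succ, add_smul, sum_add_distrib]
      _ = ∑ k ∈ range n.succ.succ,
            n.succ.choose k • (DD^[n.succ - k] f * DD^[k] g) := by
        rw [sum_range_succ' _ n.succ, Nat.choose_zero_right, tsub_zero]
    congr 1
    refine (sum_range_succ' _ _).trans (congr_arg₂ (· + ·) ?_ ?_)
    · rw [sum_range_succ, Nat.choose_succ_self, zero_smul, add_zero]
      refine sum_congr rfl fun k hk => ?_
      rw [mem_range] at hk
      congr
      omega
    · rw [Nat.choose_zero_right, tsub_zero]

/-- `hc n f` is the constant coefficient of `DD^[n] f`; morally `n!` times the `n`-th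
coefficient of `f ∘ (e^t - 1)`. -/
noncomputable def hcf (n : ℕ) (f : ℚ⟦X⟧) : ℚ := constantCoeff (DD^[n] f)

lemma hcf_zero (f : ℚ⟦X⟧) : hcf 0 f = constantCoeff f := rfl

lemma hcf_succ (n : ℕ) (f : ℚ⟦X⟧) : hcf (n + 1) f = hcf n (DD f) := by
  rw [hcf, hcf, Function.iterate_succ_apply]

lemma hcf_add (n : ℕ) (f g : ℚ⟦X⟧) : hcf n (f + g) = hcf n f + hcf n g := by
  induction n generalizing f g with
  | zero => simp [hcf_zero]
  | succ n IH => rw [hcf_succ, hcf_succ, hcf_succ, map_add, IH]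

lemma hcf_sub (n : ℕ) (f g : ℚ⟦X⟧) : hcf n (f - g) = hcf n f - hcf n g := by
  induction n generalizing f g with
  | zero => simp [hcf_zero]
  | succ n IH => rw [hcf_succ, hcf_succ, hcf_succ, map_sub, IH]

lemma hcf_smul (n : ℕ) (a : ℚ) (f : ℚ⟦X⟧) : hcf n (a • f) = a * hcf n f := by
  induction n generalizing f with
  | zero => simp [hcf_zero]
  | succ n IH => rw [hcf_succ, hcf_succ, DD.map_smul, IH]

lemma hcf_one (n : ℕ) : hcf n (1 : ℚ⟦X⟧) = if n = 0 then 1 else 0 := by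
  cases n with
  | zero => simp [hcf_zero]
  | succ n =>
    rw [hcf_succ, DD.map_one_eq_zero]
    have : ∀ m, hcf m (0 : ℚ⟦X⟧) = 0 := by
      intro m; induction m with
      | zero => simp [hcf_zero]
      | succ m IH => rw [hcf_succ, map_zero, IH]
    simp [this]

lemma hcf_mul (n : ℕ) (f g : ℚ⟦X⟧) :
    hcf n (f * g) = ∑ k ∈ range (n + 1), (n.choose k : ℚ) * (hcf (n - k) f * hcf k g) := by
  rw [hcf, DD_iterate_mul, map_sum]
  refine Finset.sum_congr rfl fun k _ => ?_
  rw [map_nsmul, map_mul, nsmul_eq_mul]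
  rfl

lemma hcf_one_add_X_pow (c : ℕ) (hc1 : 1 ≤ c) (n : ℕ) :
    hcf n ((1 + X : ℚ⟦X⟧) ^ c) = (c : ℚ) ^ n := by
  induction n with
  | zero =>
    rw [hcf_zero, map_pow, map_add, map_one, constantCoeff_X, add_zero, one_pow, pow_zero]
  | succ n IH =>
    rw [hcf_succ]
    have hD : DD ((1 + X : ℚ⟦X⟧) ^ c) = (c : ℚ) • ((1 + X : ℚ⟦X⟧) ^ c) := by
      rw [Derivation.leibniz_pow]
      have h1 : DD (1 + X : ℚ⟦X⟧) = 1 + X := by rw [map_add, DD.map_one_eq_zero, zero_add, DD_X]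
      rw [h1, smul_eq_mul, ← pow_succ, Nat.sub_add_cancel hc1, nsmul_eq_mul,
        PowerSeries.smul_eq_C_mul, map_natCast]
    rw [hD, hcf_smul, IH, pow_succ]
    ring

/-- The "substitute `X = e^t - 1`" transform, defined coefficientwise. -/
noncomputable def T (f : ℚ⟦X⟧) : ℚ⟦X⟧ := mk fun n => hcf n f / n.factorial

lemma coeff_T (n : ℕ) (f : ℚ⟦X⟧) : coeff n (T f) = hcf n f / n.factorial := coeff_mk _ _

lemma T_mul (f g : ℚ⟦X⟧) : T (f * g) = T f * T g := by
  ext n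
  rw [coeff_T, coeff_mul, hcf_mul]
  rw [Finset.Nat.sum_antidiagonal_eq_sum_range_succ
    (f := fun a b => coeff a (T f) * coeff b (T g))]
  rw [← Finset.sum_range_reflect (fun k => (n.choose k : ℚ) * (hcf (n - k) f * hcf k g)) (n+1)]
  rw [Finset.sum_div]
  refine Finset.sum_congr rfl fun k hk => ?_
  rw [mem_range] at hk
  have hkn : k ≤ n := by omega
  have e1 : n + 1 - 1 - k = n - k := by omega
  have e2 : n - (n - k) = k := by omega
  have e3 : n.choose (n - k) = n.choose k := Nat.choose_symm hkn
  simp only [e1, e2, e3]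
  rw [coeff_T, coeff_T]
  have h1 : ((n.choose k) * k.factorial * (n-k).factorial : ℕ) = n.factorial :=
    Nat.choose_mul_factorial_mul_factorial hkn
  have h1c : ((n.choose k : ℚ)) * (k.factorial : ℚ) * ((n-k).factorial : ℚ) = (n.factorial : ℚ) := by
    exact_mod_cast h1
  have hf : ((n-k).factorial : ℚ) ≠ 0 := Nat.cast_ne_zero.2 (Nat.factorial_ne_zero _)
  have hf2 : ((k).factorial : ℚ) ≠ 0 := Nat.cast_ne_zero.2 (Nat.factorial_ne_zero _)
  have hf3 : ((n).factorial : ℚ) ≠ 0 := Nat.cast_ne_zero.2 (Nat.factorial_ne_zero _)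
  field_simp
  linear_combination (hcf k f * hcf (n - k) g) * h1c

lemma T_sub (f g : ℚ⟦X⟧) : T (f - g) = T f - T g := by
  ext n; rw [coeff_T, map_sub, coeff_T, coeff_T, hcf_sub, sub_div]

lemma T_one : T 1 = 1 := by
  ext n
  rw [coeff_T, hcf_one, coeff_one]
  split_ifs with h <;> simp [h]

lemma T_one_add_X_pow (c : ℕ) (hc1 : 1 ≤ c) :
    T ((1 + X : ℚ⟦X⟧) ^ c) = rescale (c : ℚ) (exp ℚ) := by
  ext n
  rw [coeff_T, hcf_one_add_X_pow c hc1, coeff_rescale, coeff_exp]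
  simp [div_eq_mul_inv]

lemma T_natCast_mul_X (c : ℕ) : T ((c : ℚ⟦X⟧) * X) = (C (c : ℚ)) * T X := by
  have : ((c : ℕ) : ℚ⟦X⟧) * X = (c : ℚ) • X := by
    rw [PowerSeries.smul_eq_C_mul, map_natCast]
  rw [this]
  ext n
  rw [coeff_T, hcf_smul, coeff_C_mul, coeff_T, mul_div_assoc]

lemma T_X : T (X : ℚ⟦X⟧) = exp ℚ - 1 := by
  have h : (X : ℚ⟦X⟧) = (1 + X) ^ 1 - 1 := by ring
  rw [h, T_sub, T_one, T_one_add_X_pow 1 le_rfl]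
  norm_num

/-- `Q` over `ℚ`. -/
noncomputable def Qq (c : ℕ) : ℚ⟦X⟧ := (1 + X) ^ c - 1

/-- `W = c/Q - 1/X` over `ℚ`. -/
noncomputable def Wq (c : ℕ) : ℚ⟦X⟧ := Sser ℚ c * (Rser ℚ c)⁻¹

lemma constantCoeff_Rser (c : ℕ) : constantCoeff (Rser ℚ c) = (c : ℚ) := by
  rw [← coeff_zero_eq_constantCoeff_apply, Rser, coeff_mk, Nat.choose_one_right]

lemma Wq_rel (c : ℕ) (hc1 : 1 ≤ c) : Wq c * ((X : ℚ⟦X⟧) * Qq c) = (c : ℚ⟦X⟧) * X - Qq c := by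
  have hR : (Rser ℚ c)⁻¹ * Rser ℚ c = 1 :=
    PowerSeries.inv_mul_cancel _ (by
      rw [constantCoeff_Rser]
      exact_mod_cast Nat.one_le_iff_ne_zero.1 hc1)
  have hQ : (X : ℚ⟦X⟧) * Qq c = X ^ 2 * Rser ℚ c := by
    rw [Qq, ← X_mul_Rser]; ring
  calc Wq c * ((X : ℚ⟦X⟧) * Qq c) = X ^ 2 * Sser ℚ c * ((Rser ℚ c)⁻¹ * Rser ℚ c) := by
        rw [hQ, Wq]; ring
    _ = (c : ℚ⟦X⟧) * X - Qq c := by rw [hR, mul_one, X_sq_mul_Sser, Qq]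

lemma hcf_Wq (c : ℕ) (hc1 : 1 ≤ c) (n : ℕ) :
    hcf n (Wq c) = ((c : ℚ) ^ (n + 1) - 1) * bernoulli (n + 1) / (n + 1) := by
  classical
  set E := exp ℚ with hE
  set Ec := rescale (c : ℚ) (exp ℚ) with hEc
  set B := bernoulliPowerSeries ℚ with hB
  set Bc := rescale (c : ℚ) (bernoulliPowerSeries ℚ) with hBc
  set U := T (Wq c) with hU
  have hcne : (c : ℚ) ≠ 0 := by exact_mod_cast Nat.one_le_iff_ne_zero.1 hc1
  have e1 : B * (E - 1) = X := bernoulliPowerSeries_mul_exp_sub_one ℚ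
  have e2 : Bc * (Ec - 1) = C (c : ℚ) * X := by
    have h := congrArg (rescale (c : ℚ)) e1
    rw [map_mul, map_sub, map_one, rescale_X] at h
    exact h
  have eq0 : U * ((E - 1) * (Ec - 1)) = C (c : ℚ) * (E - 1) - (Ec - 1) := by
    have h := congrArg T (Wq_rel c hc1)
    rw [T_mul, T_mul, T_sub, T_natCast_mul_X, T_X] at h
    have hTQ : T (Qq c) = Ec - 1 := by
      rw [Qq, T_sub, T_one, T_one_add_X_pow c hc1]
    rw [hTQ] at h
    exact h
  have hEne : (E - 1) ≠ 0 := fun h => by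
    have := congrArg (coeff 1) h
    rw [map_sub, coeff_exp, coeff_one] at this
    norm_num [Algebra.algebraMap_self] at this
  have hEcne : (Ec - 1) ≠ 0 := fun h => by
    have := congrArg (coeff 1) h
    rw [map_sub, hEc, coeff_rescale, coeff_exp, coeff_one] at this
    norm_num [Algebra.algebraMap_self] at this
    exact hcne (by exact_mod_cast this)
  have hX : (X * U) * ((E - 1) * (Ec - 1)) = (Bc - B) * ((E - 1) * (Ec - 1)) := by
    linear_combination X * eq0 + (Ec - 1) * e1 - (E - 1) * e2
  have hXU : X * U = Bc - B := mul_right_cancel₀ (mul_ne_zero hEne hEcne) hX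
  have hco := congrArg (coeff (n + 1)) hXU
  simp only [coeff_succ_X_mul, map_sub, hBc, hB, coeff_rescale, bernoulliPowerSeries, coeff_mk,
    hU, coeff_T, Algebra.algebraMap_self, RingHom.id_apply] at hco
  have hfn : ((n.factorial : ℚ)) ≠ 0 := Nat.cast_ne_zero.2 (Nat.factorial_ne_zero _)
  have hfn1 : (((n+1).factorial : ℚ)) ≠ 0 := Nat.cast_ne_zero.2 (Nat.factorial_ne_zero _)
  have hn1 : ((n : ℚ) + 1) ≠ 0 := by positivity
  have hfs : (((n+1).factorial : ℚ)) = ((n:ℚ)+1) * (n.factorial : ℚ) := by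
    rw [Nat.factorial_succ]; push_cast; ring
  have h2 : hcf n (Wq c) = (n.factorial : ℚ) *
      ((c:ℚ)^(n+1) * (bernoulli (n+1) / (((n+1).factorial : ℚ))) -
        bernoulli (n+1) / (((n+1).factorial : ℚ))) := by
    rw [← hco]; field_simp
  rw [h2, hfs]
  field_simp

end GammaAux

namespace GammaAux

open Polynomial in
lemma DD_aeval (f : ℚ⟦X⟧) (h : Polynomial ℤ) :
    DD (Polynomial.aeval f h) = Polynomial.aeval f (Polynomial.derivative h) * DD f := by
  induction h using Polynomial.induction_on' with
  | add p q hp hq =>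
    rw [map_add, map_add, hp, hq]
    rw [Polynomial.derivative_add, map_add (Polynomial.aeval f)]
    ring
  | monomial n a =>
    cases n with
    | zero =>
      rw [Polynomial.derivative_monomial]
      simp only [Nat.cast_zero, mul_zero, Polynomial.monomial_zero_right, map_zero, zero_mul]
      rw [Polynomial.aeval_monomial, pow_zero, mul_one]
      have : (algebraMap ℤ ℚ⟦X⟧) a = ((a : ℤ) : ℚ⟦X⟧) := by
        simp [algebraMap_int_eq, map_intCast]
      rw [this, Derivation.map_intCast]
    | succ d =>
      rw [Polynomial.derivative_monomial, Polynomial.aeval_monomial, Polynomial.aeval_monomial]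
      rw [Derivation.leibniz, Derivation.leibniz_pow]
      have h0 : DD ((algebraMap ℤ ℚ⟦X⟧) a) = 0 := by
        have : (algebraMap ℤ ℚ⟦X⟧) a = ((a : ℤ) : ℚ⟦X⟧) := by
          simp [algebraMap_int_eq, map_intCast]
        rw [this, Derivation.map_intCast]
      rw [h0]
      simp only [smul_eq_mul, nsmul_eq_mul, smul_zero, add_zero, Nat.succ_sub_one]
      rw [map_mul]
      have : (algebraMap ℤ ℚ⟦X⟧) ((d : ℤ) + 1) = ((d : ℚ⟦X⟧) + 1) := by
        push_cast
        simp [algebraMap_int_eq, map_intCast]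
      push_cast
      ring

lemma negDD_iter_eq (m : ℕ) (f : ℚ⟦X⟧) :
    (fun g => -DD g)^[m] f = (-1 : ℚ) ^ m • DD^[m] f := by
  induction m generalizing f with
  | zero => simp
  | succ m IH =>
    rw [Function.iterate_succ_apply, Function.iterate_succ_apply, IH, pow_succ]
    have hneg : ∀ (k : ℕ) (g : ℚ⟦X⟧), DD^[k] (-g) = -(DD^[k] g) := by
      intro k
      induction k with
      | zero => simp
      | succ k IHk => intro g; rw [Function.iterate_succ_apply, map_neg, IHk,
          Function.iterate_succ_apply]
    rw [hneg, mul_neg_one, neg_smul, smul_neg]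

lemma DD_one_add_X_pow (c : ℕ) (hc1 : 1 ≤ c) :
    DD ((1 + X : ℚ⟦X⟧) ^ c) = (c : ℚ⟦X⟧) * (1 + X) ^ c := by
  rw [Derivation.leibniz_pow]
  have h1 : DD (1 + X : ℚ⟦X⟧) = 1 + X := by rw [map_add, DD.map_one_eq_zero, zero_add, DD_X]
  rw [h1, smul_eq_mul, ← pow_succ, Nat.sub_add_cancel hc1, nsmul_eq_mul]

lemma DD_Qq (c : ℕ) (hc1 : 1 ≤ c) : DD (Qq c) = (c : ℚ⟦X⟧) * (1 + Qq c) := by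
  have h : (1 : ℚ⟦X⟧) + Qq c = (1 + X) ^ c := by rw [Qq]; ring
  rw [Qq, map_sub, DD.map_one_eq_zero, sub_zero, DD_one_add_X_pow c hc1]
  ring

lemma aeval_hPoly_succ (f : ℚ⟦X⟧) (j : ℕ) :
    Polynomial.aeval f (hPoly (j + 1)) =
      (1 + f) * (((j : ℚ⟦X⟧) + 1) * Polynomial.aeval f (hPoly j)
        - f * Polynomial.aeval f (Polynomial.derivative (hPoly j))) := by
  show Polynomial.aeval f ((1 + Polynomial.X) *
      ((j + 1 : ℤ) • hPoly j - Polynomial.X * Polynomial.derivative (hPoly j))) = _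
  rw [map_mul, map_add, map_one, Polynomial.aeval_X, map_sub, map_zsmul, map_mul,
    Polynomial.aeval_X]
  rw [zsmul_eq_mul]
  push_cast
  ring

lemma key_identity (c : ℕ) (hc1 : 1 ≤ c) (m : ℕ) :
    (X : ℚ⟦X⟧) ^ (m+1) * Qq c ^ (m+1) * ((fun g => -DD g)^[m] (Wq c)) =
      (c : ℚ⟦X⟧) ^ (m+1) * X ^ (m+1) * Polynomial.aeval (Qq c) (hPoly m)
        - Qq c ^ (m+1) * Polynomial.aeval (X : ℚ⟦X⟧) (hPoly m) := by
  induction m with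
  | zero =>
    show (X : ℚ⟦X⟧) ^ 1 * Qq c ^ 1 * Wq c = _
    have h : hPoly 0 = 1 := rfl
    rw [h]
    simp only [map_one, pow_one, mul_one]
    have := Wq_rel c hc1
    linear_combination this
  | succ m IH =>
    have dIH := congrArg (fun g => DD g) IH
    simp only [Derivation.leibniz, Derivation.leibniz_pow, smul_eq_mul, nsmul_eq_mul,
      Nat.succ_sub_one, DD_aeval, DD_Qq c hc1, DD_X, map_sub, map_mul, Derivation.map_natCast,
      Derivation.leibniz_pow, mul_zero, zero_mul, add_zero, zero_add] at dIH
    rw [Function.iterate_succ_apply']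
    rw [aeval_hPoly_succ, aeval_hPoly_succ]
    push_cast at dIH ⊢
    linear_combination (-(X * Qq c)) * dIH +
      (((m : ℚ⟦X⟧) + 1) * ((c : ℚ⟦X⟧) * X * (1 + Qq c) + (1 + X) * Qq c)) * IH

lemma constantCoeff_negDD_iter (m : ℕ) (f : ℚ⟦X⟧) :
    constantCoeff ((fun g => -DD g)^[m] f) = (-1 : ℚ) ^ m * hcf m f := by
  rw [negDD_iter_eq, PowerSeries.smul_eq_C_mul, map_mul, constantCoeff_C]
  rfl

/-- The element `δ_k` as a rational number, with `k = m + 2`. -/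
noncomputable def deltaQ (m : ℕ) : ℚ := (-1) ^ (m + 2) * bernoulli (m + 1) / ((m : ℚ) + 1)

/-- The master `ℚ`-coefficients divisibility. -/
lemma E_dvd (c : ℕ) (hc1 : 1 ≤ c) (m : ℕ) :
    (X : ℚ⟦X⟧) ^ (2*m+3) ∣
      (c : ℚ⟦X⟧) ^ (m+1) * X ^ (m+1) * Polynomial.aeval (Qq c) (hPoly m)
        - Qq c ^ (m+1) * Polynomial.aeval (X : ℚ⟦X⟧) (hPoly m)
        - ((c : ℚ⟦X⟧) ^ (m+1) - 1) * C (deltaQ m) * X ^ (m+1) * Qq c ^ (m+1) := by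
  set G : ℚ⟦X⟧ := ((fun g => -DD g)^[m] (Wq c)) - ((c : ℚ⟦X⟧) ^ (m+1) - 1) * C (deltaQ m)
    with hGdef
  have hm1 : ((m : ℚ) + 1) ≠ 0 := by positivity
  have hG : constantCoeff G = 0 := by
    rw [hGdef, map_sub, constantCoeff_negDD_iter, hcf_Wq c hc1, map_mul, map_sub, map_pow,
      map_natCast, map_one, constantCoeff_C, deltaQ]
    have hsgn : ((-1 : ℚ)) ^ (m + 2) = (-1 : ℚ) ^ m := by
      rw [pow_succ, pow_succ]; ring
    rw [hsgn]
    field_simp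
    ring
  obtain ⟨g, hg⟩ := X_dvd_iff.2 hG
  have hQ : Qq c = X * Rser ℚ c := (X_mul_Rser c).symm
  have hE : (c : ℚ⟦X⟧) ^ (m+1) * X ^ (m+1) * Polynomial.aeval (Qq c) (hPoly m)
        - Qq c ^ (m+1) * Polynomial.aeval (X : ℚ⟦X⟧) (hPoly m)
        - ((c : ℚ⟦X⟧) ^ (m+1) - 1) * C (deltaQ m) * X ^ (m+1) * Qq c ^ (m+1)
      = X ^ (m+1) * Qq c ^ (m+1) * G := by
    rw [hGdef]
    linear_combination (-1 : ℚ⟦X⟧) * key_identity c hc1 m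
  rw [hE, hg, hQ]
  refine ⟨Rser ℚ c ^ (m+1) * g, ?_⟩
  ring

lemma map_aeval' {A B : Type*} [CommRing A] [CommRing B] (φ : A →+* B) (f : A⟦X⟧)
    (h : Polynomial ℤ) :
    PowerSeries.map φ (Polynomial.aeval f h) = Polynomial.aeval (PowerSeries.map φ f) h := by
  induction h using Polynomial.induction_on' with
  | add p q hp hq => rw [map_add, map_add, map_add, hp, hq]
  | monomial n a =>
    rw [Polynomial.aeval_monomial, Polynomial.aeval_monomial, map_mul, map_pow]
    congr 1
    have h1 : (algebraMap ℤ A⟦X⟧) a = ((a : ℤ) : A⟦X⟧) := by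
      simp [algebraMap_int_eq, map_intCast]
    have h2 : (algebraMap ℤ B⟦X⟧) a = ((a : ℤ) : B⟦X⟧) := by
      simp [algebraMap_int_eq, map_intCast]
    rw [h1, h2, map_intCast]

end GammaAux

open GammaAux in
/-- With `Q = (1+X)^c - 1 ∈ ℤ_p[[X]]` (`c ≥ 1` prime to `p`, `2 ≤ k ≤ p-1`),
the rational number `δ_k = (-1)^k B_{k-1}/(k-1)` is `p`-integral, and for the
corresponding `δ ∈ ℤ_p` we have
`c^{k-1} X^{k-1} h_{k-2}(Q) - Q^{k-1} h_{k-2}(X) - (c^{k-1} - 1) δ X^{k-1} Q^{k-1}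
  ∈ X^k Q^{k-1} ℤ_p[[X]]`;
this expresses that `(χ(γ)^{k-1} γ - 1)(x_k) ∈ π ℤ_p[[π]]` for
`x_k = π^{1-k} h_{k-2}(π) - δ_k`. -/
theorem gamma_action_xk_integral (p : ℕ) [Fact p.Prime] (hp : 3 ≤ p)
    (k : ℕ) (hk : 2 ≤ k) (hkp : k ≤ p - 1)
    (c : ℕ) (hc : 1 ≤ c) (hpc : ¬ (p ∣ c)) :
    ∃ δ : ℤ_[p],
      (δ : ℚ_[p]) = (((-1) ^ k * _root_.bernoulli (k - 1) / ((k : ℚ) - 1) : ℚ) : ℚ_[p]) ∧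
      (PowerSeries.X : PowerSeries ℤ_[p]) ^ k *
          ((1 + PowerSeries.X : PowerSeries ℤ_[p]) ^ c - 1) ^ (k - 1) ∣
        (c : PowerSeries ℤ_[p]) ^ (k - 1) * (PowerSeries.X : PowerSeries ℤ_[p]) ^ (k - 1) *
            Polynomial.aeval ((1 + PowerSeries.X : PowerSeries ℤ_[p]) ^ c - 1) (hPoly (k - 2)) -
          ((1 + PowerSeries.X : PowerSeries ℤ_[p]) ^ c - 1) ^ (k - 1) *
            Polynomial.aeval (PowerSeries.X : PowerSeries ℤ_[p]) (hPoly (k - 2)) -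
          ((c : PowerSeries ℤ_[p]) ^ (k - 1) - 1) * PowerSeries.C (R := ℤ_[p]) δ *
            (PowerSeries.X : PowerSeries ℤ_[p]) ^ (k - 1) *
            ((1 + PowerSeries.X : PowerSeries ℤ_[p]) ^ c - 1) ^ (k - 1) := by
  classical
  obtain ⟨m, rfl⟩ : ∃ m, k = m + 2 := ⟨k - 2, by omega⟩
  have hm1 : m + 1 ≤ p - 2 := by omega
  have hm1p : m + 1 < p := by omega
  -- the p-adic integrality of δ
  have hnorm : ‖((deltaQ m : ℚ) : ℚ_[p])‖ ≤ 1 := by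
    rw [deltaQ]
    push_cast
    rw [norm_div, norm_mul, norm_pow, norm_neg, norm_one, one_pow, one_mul]
    have hden : ‖((m : ℚ_[p]) + 1)‖ = 1 := by
      have : ((m : ℚ_[p]) + 1) = ((m + 1 : ℕ) : ℚ_[p]) := by push_cast; ring
      rw [this, norm_natCast_eq_one (by omega) hm1p]
    rw [hden, div_one]
    exact bernoulli_padic_integral hp (m+1) hm1
  refine ⟨⟨((deltaQ m : ℚ) : ℚ_[p]), hnorm⟩, ?_, ?_⟩
  · show ((deltaQ m : ℚ) : ℚ_[p]) = _
    congr 1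
    rw [deltaQ]
    have : ((m : ℚ) + 2) - 1 = (m : ℚ) + 1 := by ring
    push_cast
    rw [this]
  · -- the divisibility
    simp only [show m + 2 - 1 = m + 1 from rfl, show m + 2 - 2 = m from rfl]
    set δz : ℤ_[p] := ⟨((deltaQ m : ℚ) : ℚ_[p]), hnorm⟩ with hδz
    set φp : ℤ_[p] →+* ℚ_[p] := PadicInt.Coe.ringHom with hφp
    set ψ : ℚ →+* ℚ_[p] := Rat.castHom ℚ_[p] with hψ
    set Ez : PowerSeries ℤ_[p] :=
      (c : PowerSeries ℤ_[p]) ^ (m+1) * (PowerSeries.X : PowerSeries ℤ_[p]) ^ (m+1) *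
            Polynomial.aeval ((1 + PowerSeries.X : PowerSeries ℤ_[p]) ^ c - 1) (hPoly m) -
          ((1 + PowerSeries.X : PowerSeries ℤ_[p]) ^ c - 1) ^ (m+1) *
            Polynomial.aeval (PowerSeries.X : PowerSeries ℤ_[p]) (hPoly m) -
          ((c : PowerSeries ℤ_[p]) ^ (m+1) - 1) * PowerSeries.C (R := ℤ_[p]) δz *
            (PowerSeries.X : PowerSeries ℤ_[p]) ^ (m+1) *
            ((1 + PowerSeries.X : PowerSeries ℤ_[p]) ^ c - 1) ^ (m+1) with hEzdef
    set Eq : ℚ⟦X⟧ :=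
      (c : ℚ⟦X⟧) ^ (m+1) * X ^ (m+1) * Polynomial.aeval (Qq c) (hPoly m)
        - Qq c ^ (m+1) * Polynomial.aeval (X : ℚ⟦X⟧) (hPoly m)
        - ((c : ℚ⟦X⟧) ^ (m+1) - 1) * C (deltaQ m) * X ^ (m+1) * Qq c ^ (m+1) with hEqdef
    have hcoeffQ : ∀ i < 2*m+3, (PowerSeries.coeff i) Eq = 0 :=
      fun i hi => PowerSeries.X_pow_dvd_iff.1 (E_dvd c hc m) i hi
    have hmap : PowerSeries.map φp Ez = PowerSeries.map ψ Eq := by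
      rw [hEzdef, hEqdef]
      simp only [map_sub, map_mul, map_pow, PowerSeries.map_X, PowerSeries.map_C, map_natCast,
        map_one, map_add, map_aeval', Qq]
      rfl
    have hz : ∀ i, i < 2*m+3 → (PowerSeries.coeff i) Ez = 0 := by
      intro i hi
      have h1 : φp ((PowerSeries.coeff i) Ez) = 0 := by
        rw [← PowerSeries.coeff_map, hmap, PowerSeries.coeff_map, hcoeffQ i hi, map_zero]
      exact PadicInt.coe_eq_zero.1 h1
    obtain ⟨g, hg⟩ := PowerSeries.X_pow_dvd_iff.2 hz
    have hRunit : IsUnit (Rser ℤ_[p] c) := by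
      rw [PowerSeries.isUnit_iff_constantCoeff]
      have hcc : PowerSeries.constantCoeff (Rser ℤ_[p] c) = (c : ℤ_[p]) := by
        rw [← PowerSeries.coeff_zero_eq_constantCoeff_apply, Rser, PowerSeries.coeff_mk,
          Nat.choose_one_right]
      rw [hcc, PadicInt.isUnit_iff]
      refine le_antisymm (PadicInt.norm_le_one _) (not_lt.1 fun hlt => ?_)
      have hd : (p : ℤ) ∣ (c : ℤ) := (PadicInt.norm_int_lt_one_iff_dvd _).1 (by exact_mod_cast hlt)
      exact hpc (by exact_mod_cast hd)
    have hQR : ((1 + PowerSeries.X : PowerSeries ℤ_[p]) ^ c - 1) = PowerSeries.X * Rser ℤ_[p] c :=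
      (X_mul_Rser c).symm
    have hkey : (PowerSeries.X : PowerSeries ℤ_[p]) ^ (m+2) *
        ((1 + PowerSeries.X : PowerSeries ℤ_[p]) ^ c - 1) ^ (m+1)
        = PowerSeries.X ^ (2*m+3) * Rser ℤ_[p] c ^ (m+1) := by
      rw [hQR]; ring
    rw [hkey, hg]
    exact mul_dvd_mul_left _ ((hRunit.pow (m+1)).dvd)
end

section
/- For every integer j ≥ 0, h_j is the unique monic polynomial P ∈ ℚ[X] of degree j such that the coefficients of t, t², …, t^j in the power series (t/(e^t − 1))^{j+1} · P(e^t − 1) ∈ ℚ[[t]] all vanish. -/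
open Polynomial


lemma hPoly_monic_deg (j : ℕ) : (hPoly j).Monic ∧ (hPoly j).natDegree = j := by
  induction j with
  | zero => exact ⟨monic_one, natDegree_one⟩
  | succ j ih =>
    obtain ⟨hm, hd⟩ := ih
    set h : ℤ[X] := hPoly j with hh
    set g : ℤ[X] := (j + 1 : ℤ) • h - X * derivative h with hg
    have hcj : h.coeff j = 1 := by have := hm.coeff_natDegree; rwa [hd] at this
    have hXd : (X * derivative h).coeff j = (j : ℤ) := by
      cases j with
      | zero =>
        have : derivative h = 0 := by
          rw [eq_C_of_natDegree_eq_zero hd]; simp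
        simp [this]
      | succ k =>
        rw [Polynomial.coeff_X_mul, Polynomial.coeff_derivative, hcj]
        push_cast; ring
    have hgc : g.coeff j = 1 := by
      rw [hg, coeff_sub, Polynomial.coeff_smul, hXd, hcj]
      simp
    have hgdeg : g.natDegree ≤ j := by
      refine (natDegree_sub_le _ _).trans (max_le ((natDegree_smul_le _ _).trans hd.le) ?_)
      cases j with
      | zero =>
        have : derivative h = 0 := by rw [eq_C_of_natDegree_eq_zero hd]; simp
        simp [this]
      | succ k =>
        refine (natDegree_mul_le).trans ?_
        have := natDegree_derivative_le h
        simp only [natDegree_X]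
        omega
    have hgm : g.Monic := monic_of_natDegree_le_of_coeff_eq_one j hgdeg hgc
    have hgdeg' : g.natDegree = j := by
      refine le_antisymm hgdeg (le_natDegree_of_ne_zero ?_)
      rw [hgc]; exact one_ne_zero
    have h1X : (1 + X : ℤ[X]).Monic := by
      have := monic_X_add_C (1 : ℤ)
      rwa [C_1, add_comm] at this
    refine ⟨h1X.mul hgm, ?_⟩
    rw [show hPoly (j+1) = (1 + X) * g from rfl, h1X.natDegree_mul hgm, hgdeg']
    have : (1 + X : ℤ[X]).natDegree = 1 := by
      rw [add_comm, ← C_1, natDegree_X_add_C]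
    omega

lemma hPoly_coeff_zero (j : ℕ) : (hPoly j).coeff 0 = j.factorial := by
  induction j with
  | zero => simp [hPoly]
  | succ j ih =>
    rw [show hPoly (j+1) = (1 + X) * ((j + 1 : ℤ) • hPoly j - X * derivative (hPoly j)) from rfl]
    rw [Polynomial.mul_coeff_zero, coeff_sub, Polynomial.mul_coeff_zero]
    simp [ih, Nat.factorial_succ]


namespace HW
local notation "u" => (PowerSeries.exp ℚ - 1)

lemma hu0 : PowerSeries.constantCoeff (R := ℚ) u = 0 := by
  simp [PowerSeries.constantCoeff_exp]

lemma hu1 : PowerSeries.coeff (R := ℚ) 1 u = 1 := by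
  simp [PowerSeries.coeff_exp]

lemma hXdvd : (PowerSeries.X : PowerSeries ℚ) ∣ u := PowerSeries.X_dvd_iff.mpr hu0

lemma coeff_mul_u_pow_lt (f : PowerSeries ℚ) {i m : ℕ} (him : i < m) :
    PowerSeries.coeff (R := ℚ) i (f * u ^ m) = 0 := by
  have : (PowerSeries.X : PowerSeries ℚ) ^ m ∣ f * u ^ m :=
    Dvd.dvd.mul_left (pow_dvd_pow_of_dvd hXdvd m) f
  exact (PowerSeries.X_pow_dvd_iff.mp this) i him

lemma coeff_mul_u_pow_self (f : PowerSeries ℚ) (m : ℕ) :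
    PowerSeries.coeff (R := ℚ) m (f * u ^ m) = PowerSeries.constantCoeff (R := ℚ) f := by
  obtain ⟨g, hgu⟩ := hXdvd
  have hg0 : PowerSeries.constantCoeff (R := ℚ) g = 1 := by
    have h1 := hu1
    rw [hgu, PowerSeries.coeff_succ_X_mul 0, PowerSeries.coeff_zero_eq_constantCoeff] at h1
    exact h1
  rw [hgu, mul_pow, show f * (PowerSeries.X ^ m * g ^ m) = f * g ^ m * PowerSeries.X ^ m by ring]
  have := PowerSeries.coeff_mul_X_pow (f * g ^ m) m 0
  rw [Nat.zero_add] at this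
  rw [this]
  simp [PowerSeries.coeff_zero_eq_constantCoeff, map_pow, hg0]

lemma coeff_mul_aeval (f : PowerSeries ℚ) (Q : ℚ[X]) {j : ℕ} (hdeg : Q.natDegree ≤ j) (i : ℕ) :
    PowerSeries.coeff (R := ℚ) i (f * Polynomial.aeval u Q)
      = ∑ m ∈ Finset.range (j + 1), Q.coeff m * PowerSeries.coeff (R := ℚ) i (f * u ^ m) := by
  rw [Polynomial.aeval_eq_sum_range' (Nat.lt_succ_of_le hdeg), Finset.mul_sum]
  rw [map_sum]
  refine Finset.sum_congr rfl fun m _ => ?_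
  rw [mul_smul_comm, map_smul, smul_eq_mul]

end HW

namespace HW
local notation "u" => (PowerSeries.exp ℚ - 1)

lemma key_uniq (j : ℕ) (T : PowerSeries ℚ)
    (hT : T * (PowerSeries.exp ℚ - 1) = PowerSeries.X) (Q : ℚ[X]) (hdeg : Q.natDegree ≤ j)
    (hc : ∀ i : ℕ, 1 ≤ i → i ≤ j →
      PowerSeries.coeff (R := ℚ) i (T ^ (j + 1) * Polynomial.aeval u Q) = 0)
    (h0 : Q.coeff 0 = 0) : Q = 0 := by
  have hT0 : PowerSeries.constantCoeff (R := ℚ) T = 1 := by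
    have h1 := congrArg (PowerSeries.coeff (R := ℚ) 1) hT
    rw [PowerSeries.coeff_mul] at h1
    rw [Finset.Nat.antidiagonal_succ] at h1
    simp [Prod.map, PowerSeries.coeff_exp, PowerSeries.coeff_zero_eq_constantCoeff,
      Finset.sum_pair] at h1
    rw [← h1]
  have hT0' : PowerSeries.constantCoeff (R := ℚ) (T ^ (j + 1)) = 1 := by
    rw [map_pow, hT0, one_pow]
  ext n
  induction n using Nat.strong_induction_on with
  | _ n IH =>
    rcases Nat.eq_zero_or_pos n with h | hn
    · simpa [h] using h0
    rcases le_or_gt n j with hnj | hnj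
    · have hcn := hc n hn hnj
      rw [coeff_mul_aeval (T ^ (j+1)) Q hdeg n] at hcn
      rw [Finset.sum_eq_single n] at hcn
      · rw [coeff_mul_u_pow_self, hT0', mul_one] at hcn
        simpa using hcn
      · intro m hm hmn
        rcases lt_or_gt_of_ne hmn with h1 | h1
        · simp [IH m h1]
        · rw [coeff_mul_u_pow_lt _ h1, mul_zero]
      · intro hnmem
        exact absurd (Finset.mem_range.mpr (by omega)) hnmem
    · simp [Polynomial.coeff_eq_zero_of_natDegree_lt (lt_of_le_of_lt hdeg hnj)]

end HW

namespace HW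
local notation "u" => (PowerSeries.exp ℚ - 1)
local notation "dd" => PowerSeries.derivative ℚ

lemma deriv_u : dd u = 1 + u := by
  have : dd (PowerSeries.exp ℚ) = PowerSeries.exp ℚ := by
    ext n
    rw [PowerSeries.coeff_derivative, PowerSeries.coeff_exp, PowerSeries.coeff_exp,
      Nat.factorial_succ]
    push_cast
    field_simp
  simp [map_sub, this]

lemma coeff_X_mul_deriv (f : PowerSeries ℚ) (i : ℕ) :
    PowerSeries.coeff (R := ℚ) i (PowerSeries.X * dd f) = i * PowerSeries.coeff (R := ℚ) i f := by
  cases i with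
  | zero =>
    simp [PowerSeries.coeff_zero_eq_constantCoeff]
  | succ n =>
    rw [PowerSeries.coeff_succ_X_mul, PowerSeries.coeff_derivative]
    push_cast; ring



lemma key_rec (j : ℕ) (T : PowerSeries ℚ)
    (hT : T * (PowerSeries.exp ℚ - 1) = PowerSeries.X) :
    (T ^ (j + 1 + 1) * Polynomial.aeval u (((hPoly (j+1)).map (Int.castRingHom ℚ)))) =
      ((j:ℚ) + 1) • (T ^ (j + 1) * Polynomial.aeval u ((hPoly j).map (Int.castRingHom ℚ)))
      - PowerSeries.X * dd (T ^ (j + 1) * Polynomial.aeval u ((hPoly j).map (Int.castRingHom ℚ))) := by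
  set hj : ℚ[X] := (hPoly j).map (Int.castRingHom ℚ) with hhj
  set H := Polynomial.aeval u hj with hH
  set H' := Polynomial.aeval u (Polynomial.derivative hj) with hH'
  set d := dd T with hd
  have hmap : ((hPoly (j+1)).map (Int.castRingHom ℚ)) =
      (1 + Polynomial.X) * (((j:ℚ) + 1) • hj - Polynomial.X * Polynomial.derivative hj) := by
    rw [show hPoly (j+1) = (1 + Polynomial.X) *
      ((j + 1 : ℤ) • hPoly j - Polynomial.X * Polynomial.derivative (hPoly j)) from rfl]
    rw [Polynomial.map_mul, Polynomial.map_add, Polynomial.map_sub, Polynomial.map_mul]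
    rw [Polynomial.map_one, Polynomial.map_X, Polynomial.derivative_map]
    congr 2
    rw [zsmul_eq_mul, Polynomial.map_mul, Polynomial.smul_eq_C_mul]
    push_cast
    simp [hhj]
  have haev : Polynomial.aeval u ((hPoly (j+1)).map (Int.castRingHom ℚ)) =
      (1 + u) * (((j:ℚ) + 1) • H - u * H') := by
    rw [hmap, map_mul, map_add, map_one, Polynomial.aeval_X, map_sub, map_smul, map_mul,
      Polynomial.aeval_X]
  have hdu : dd u = 1 + u := deriv_u
  have hdH : dd H = H' * (1 + u) := by
    rw [hH, Derivation.map_aeval, ← hH', hdu, smul_eq_mul]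
  have hdT' : u * d = 1 - T * (1 + u) := by
    have h2 := congrArg dd hT
    rw [Derivation.leibniz, PowerSeries.derivative_X, ← hd, hdu, smul_eq_mul, smul_eq_mul] at h2
    linear_combination h2
  have hdA : dd (T ^ (j + 1) * H) =
      T ^ (j+1) * (H' * (1 + u)) + H * (((j:ℚ)+1) • (T ^ j * d)) := by
    rw [Derivation.leibniz, Derivation.leibniz_pow, hdH, smul_eq_mul, smul_eq_mul, ← hd]
    congr 1
    rw [smul_eq_mul, Nat.add_sub_cancel, nsmul_eq_mul, Algebra.smul_def,
      PowerSeries.algebraMap_apply]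
    simp only [Algebra.algebraMap_self, RingHom.id_apply, map_add, map_one, map_natCast]
    push_cast
    ring
  rw [haev, hdA, ← hT]
  rw [Algebra.smul_def, Algebra.smul_def, Algebra.smul_def]
  simp only [map_add, map_one, map_natCast, PowerSeries.algebraMap_apply, Algebra.algebraMap_self, RingHom.id_apply]
  push_cast
  linear_combination (((j:PowerSeries ℚ)+1) * T^(j+1) * H) * hdT'

lemma key_exists (j : ℕ) (T : PowerSeries ℚ)
    (hT : T * (PowerSeries.exp ℚ - 1) = PowerSeries.X) :
    ∀ i : ℕ, 1 ≤ i → i ≤ j →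
      PowerSeries.coeff (R := ℚ) i (T ^ (j + 1) *
        Polynomial.aeval u ((hPoly j).map (Int.castRingHom ℚ))) = 0 := by
  induction j with
  | zero => intro i h1 h0; omega
  | succ j ih =>
    intro i h1 hij
    have hrec := congrArg (PowerSeries.coeff (R := ℚ) i) (key_rec j T hT)
    rw [map_sub, map_smul, coeff_X_mul_deriv, smul_eq_mul] at hrec
    rw [hrec]
    rcases Nat.lt_or_ge i (j+1) with hcase | hcase
    · rw [ih i h1 (by omega)]
      ring
    · have hi : i = j + 1 := by omega
      subst hi
      push_cast
      ring

end HW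

/-- `h_j` is the unique monic polynomial `P ∈ ℚ[X]` of degree `j` such that the
coefficients of `t, t², …, t^j` in `(t/(e^t-1))^{j+1} · P(e^t-1)` all vanish.
Here `T` denotes `t/(e^t-1)`, the unique power series with `T * (e^t-1) = t`. -/
theorem hPoly_unique (j : ℕ) (T : PowerSeries ℚ)
    (hT : T * (PowerSeries.exp ℚ - 1) = PowerSeries.X) (P : Polynomial ℚ) :
    (P.Monic ∧ P.natDegree = j ∧
        ∀ i : ℕ, 1 ≤ i → i ≤ j →
          PowerSeries.coeff (R := ℚ) i (T ^ (j + 1) * Polynomial.aeval (PowerSeries.exp ℚ - 1) P) = 0)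
      ↔ P = (hPoly j).map (Int.castRingHom ℚ) := by
  have hmd := hPoly_monic_deg j
  set h : ℚ[X] := (hPoly j).map (Int.castRingHom ℚ) with hh
  have hhm : h.Monic := hmd.1.map _
  have hhd : h.natDegree = j := by
    rw [hh, hmd.1.natDegree_map]; exact hmd.2
  constructor
  · rintro ⟨hP, hPd, hPc⟩
    have hfact : h.coeff 0 = (j.factorial : ℚ) := by
      rw [hh, Polynomial.coeff_map, hPoly_coeff_zero]
      simp
    set c : ℚ := P.coeff 0 / (j.factorial : ℚ) with hc
    set Q : ℚ[X] := P - c • h with hQ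
    have hQdeg : Q.natDegree ≤ j :=
      (Polynomial.natDegree_sub_le _ _).trans
        (max_le hPd.le ((Polynomial.natDegree_smul_le _ _).trans hhd.le))
    have hQc : ∀ i : ℕ, 1 ≤ i → i ≤ j →
        PowerSeries.coeff (R := ℚ) i
          (T ^ (j + 1) * Polynomial.aeval (PowerSeries.exp ℚ - 1) Q) = 0 := by
      intro i h1 h2
      rw [hQ, map_sub, map_smul, mul_sub, map_sub, hPc i h1 h2, mul_smul_comm, map_smul,
        HW.key_exists j T hT i h1 h2, smul_zero, sub_zero]
    have hQ0 : Q.coeff 0 = 0 := by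
      rw [hQ, Polynomial.coeff_sub, Polynomial.coeff_smul, hfact, hc, smul_eq_mul,
        div_mul_cancel₀, sub_self]
      exact_mod_cast j.factorial_ne_zero
    have hQzero := HW.key_uniq j T hT Q hQdeg hQc hQ0
    have hPQ : P = c • h := by
      rw [← sub_eq_zero]; exact hQzero
    have h1 : P.coeff j = 1 := by rw [← hPd]; exact hP.coeff_natDegree
    have h2 : h.coeff j = 1 := by rw [← hhd]; exact hhm.coeff_natDegree
    rw [hPQ, Polynomial.coeff_smul, h2, smul_eq_mul, mul_one] at h1
    rw [hPQ, h1, one_smul]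
  · rintro rfl
    exact ⟨hhm, hhd, HW.key_exists j T hT⟩
end

section
/- Let p be an odd prime and let m be an integer with 1 ≤ m ≤ p−2. Then the rational number B_m/m is p-integral, i.e. padicValRat p (B_m/m) ≥ 0. -/
open Finset

lemma sum_range_pow_zmod' (p : ℕ) [NeZero p] (m : ℕ) :
    ∑ k ∈ range p, ((k : ZMod p)) ^ m = ∑ x : ZMod p, x ^ m := by
  refine Finset.sum_nbij' (i := fun k => ((k : ZMod p))) (j := fun x => x.val)
    ?_ ?_ ?_ ?_ ?_
  · intros; exact Finset.mem_univ _
  · intro x _; exact Finset.mem_range.mpr (ZMod.val_lt _)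
  · intro k hk; exact ZMod.val_cast_of_lt (Finset.mem_range.mp hk)
  · intro x _; exact ZMod.natCast_rightInverse x
  · intro k hk; rfl

lemma dvd_sum_pow' (p : ℕ) [hf : Fact p.Prime] (m : ℕ) (hm : m < p - 1) :
    p ∣ ∑ k ∈ range p, k ^ m := by
  have h0 : ((∑ k ∈ range p, k ^ m : ℕ) : ZMod p) = 0 := by
    push_cast
    rw [sum_range_pow_zmod']
    exact FiniteField.sum_pow_lt_card_sub_one (K := ZMod p) m (by rwa [ZMod.card])
  exact (ZMod.natCast_eq_zero_iff _ _).mp h0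

lemma padicNorm_prime_pow (p : ℕ) [Fact p.Prime] (n : ℕ) :
    padicNorm p ((p : ℚ) ^ n) = ((p : ℚ)⁻¹) ^ n := by
  induction n with
  | zero => simp [padicNorm.one]
  | succ n ih => rw [pow_succ, padicNorm.mul, ih, padicNorm.padicNorm_p_of_prime, pow_succ]

lemma bernoulli_padicNorm_le (p : ℕ) [hf : Fact p.Prime] (hp3 : 3 ≤ p) :
    ∀ m, m ≤ p - 2 → padicNorm p (_root_.bernoulli m) ≤ 1 := by
  intro m
  induction m using Nat.strong_induction_on with
  | _ m ih =>
  intro hm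
  rcases Nat.eq_zero_or_pos m with rfl | hm0
  · simp [padicNorm.one]
  have hmp : m + 1 < p := by omega
  have hMne : ((m : ℚ) + 1) ≠ 0 := by positivity
  have key := sum_range_pow p m
  rw [Finset.sum_range_succ] at key
  have hlast : _root_.bernoulli m * ((m + 1).choose m) * (p : ℚ) ^ (m + 1 - m) / (m + 1) =
      _root_.bernoulli m * p := by
    rw [Nat.choose_succ_self_right, Nat.add_sub_cancel_left, pow_one]
    push_cast
    field_simp
  rw [hlast] at key
  have hsplit : _root_.bernoulli m * p =
      (∑ k ∈ range p, (k : ℚ) ^ m) -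
        ∑ i ∈ range m, _root_.bernoulli i * ((m + 1).choose i) * (p : ℚ) ^ (m + 1 - i) / (m + 1) := by
    rw [key]; ring
  have hp1 : (1 : ℚ) < p := by exact_mod_cast (by omega : 1 < p)
  have hpinv_pos : (0 : ℚ) < (p : ℚ)⁻¹ := by positivity
  have hpinv_le : (p : ℚ)⁻¹ ≤ 1 := by
    rw [inv_le_one_iff₀]; right; exact le_of_lt hp1
  -- norm of the power sum
  have hS : padicNorm p (∑ k ∈ range p, (k : ℚ) ^ m) ≤ (p : ℚ)⁻¹ := by
    have hdvd : ((p : ℤ)) ^ 1 ∣ ((∑ k ∈ range p, k ^ m : ℕ) : ℤ) := by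
      rw [pow_one]
      exact_mod_cast dvd_sum_pow' p m (by omega)
    have h := (padicNorm.dvd_iff_norm_le (p := p) (n := 1)
      (z := ((∑ k ∈ range p, k ^ m : ℕ) : ℤ))).mp (by exact_mod_cast hdvd)
    have hcast : (((∑ k ∈ range p, k ^ m : ℕ) : ℤ) : ℚ) = ∑ k ∈ range p, (k : ℚ) ^ m := by
      push_cast; ring
    rw [hcast] at h
    simpa using h
  -- norm of each earlier term
  have hT : padicNorm p
      (∑ i ∈ range m, _root_.bernoulli i * ((m + 1).choose i) * (p : ℚ) ^ (m + 1 - i) / (m + 1)) ≤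
      (p : ℚ)⁻¹ := by
    apply padicNorm.sum_le' _ (le_of_lt hpinv_pos)
    intro i hi
    have him : i < m := Finset.mem_range.mp hi
    have hBi : padicNorm p (_root_.bernoulli i) ≤ 1 := ih i him (by omega)
    have hC : padicNorm p (((m + 1).choose i : ℚ)) ≤ 1 := padicNorm.of_nat _
    have hM : padicNorm p ((m : ℚ) + 1) = 1 := by
      have hnd : ¬ p ∣ (m + 1) := fun h => absurd (Nat.le_of_dvd (by omega) h) (by omega)
      have := (padicNorm.nat_eq_one_iff (p := p) (m := m + 1)).mpr hnd
      simpa using this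
    have hpow : padicNorm p ((p : ℚ) ^ (m + 1 - i)) ≤ (p : ℚ)⁻¹ := by
      rw [padicNorm_prime_pow]
      calc ((p : ℚ)⁻¹) ^ (m + 1 - i) ≤ ((p : ℚ)⁻¹) ^ 1 :=
            pow_le_pow_of_le_one (le_of_lt hpinv_pos) hpinv_le (by omega)
        _ = (p : ℚ)⁻¹ := pow_one _
    rw [padicNorm.div, padicNorm.mul, padicNorm.mul, hM, div_one]
    calc padicNorm p (_root_.bernoulli i) * padicNorm p (((m + 1).choose i : ℚ)) *
          padicNorm p ((p : ℚ) ^ (m + 1 - i)) ≤ 1 * 1 * (p : ℚ)⁻¹ := by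
          gcongr <;> exact padicNorm.nonneg _
      _ = (p : ℚ)⁻¹ := by ring
  have hfinal : padicNorm p (_root_.bernoulli m) * (p : ℚ)⁻¹ ≤ (p : ℚ)⁻¹ := by
    have := padicNorm.sub (p := p)
      (q := ∑ k ∈ range p, (k : ℚ) ^ m)
      (r := ∑ i ∈ range m, _root_.bernoulli i * ((m + 1).choose i) * (p : ℚ) ^ (m + 1 - i) / (m + 1))
    rw [← hsplit] at this
    rw [padicNorm.mul, padicNorm.padicNorm_p_of_prime] at this
    exact this.trans (max_le hS hT)
  have h2 : padicNorm p (_root_.bernoulli m) * (p : ℚ)⁻¹ ≤ 1 * (p : ℚ)⁻¹ := by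
    simpa using hfinal
  exact (mul_le_mul_iff_of_pos_right hpinv_pos).mp h2


/-- For an odd prime `p` and `1 ≤ m ≤ p - 2`, the rational number `B_m / m`
is `p`-integral. -/
theorem bernoulli_div_self_p_integral (p : ℕ) [Fact p.Prime] (hp : Odd p)
    (m : ℕ) (hm1 : 1 ≤ m) (hm2 : m ≤ p - 2) :
    0 ≤ padicValRat p (_root_.bernoulli m / (m : ℚ)) := by
  have hprime := (Fact.out : p.Prime)
  have hp3 : 3 ≤ p := by
    have h2 := hprime.two_le
    have hne2 : p ≠ 2 := by rintro rfl; exact (by norm_num : ¬ Odd 2) hp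
    omega
  have hB : padicNorm p (_root_.bernoulli m) ≤ 1 := bernoulli_padicNorm_le p hp3 m hm2
  have hmlt : m < p := by omega
  have hmnd : ¬ p ∣ m := fun h => absurd (Nat.le_of_dvd (by omega) h) (by omega)
  have hmn : padicNorm p (m : ℚ) = 1 := (padicNorm.nat_eq_one_iff (p := p) (m := m)).mpr hmnd
  have hq : padicNorm p (_root_.bernoulli m / (m : ℚ)) ≤ 1 := by
    rw [padicNorm.div, hmn, div_one]; exact hB
  by_cases hq0 : _root_.bernoulli m / (m : ℚ) = 0
  · rw [hq0]; simp
  · rw [padicNorm.eq_zpow_of_nonzero hq0] at hq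
    have hp1 : (1 : ℚ) < p := by exact_mod_cast (by omega : 1 < p)
    by_contra hneg
    push_neg at hneg
    have : (1 : ℚ) < (p : ℚ) ^ (-padicValRat p (_root_.bernoulli m / (m : ℚ))) := by
      apply one_lt_zpow₀ hp1
      omega
    linarith
end

section
/- For every integer k ≥ 2, the identity (t/(e^t − 1))^{k−1} · h_{k−2}(e^t − 1) − (−1)^k · (B_{k−1}/(k−1)) · t^{k−1} = (k−2)!·(1 + (−1)^k ∑_{n ≥ k} binom(n−1, k−2) B_n t^n/n!) holds in ℚ[[t]]. (In particular, with x_k = π^{1−k}h_{k−2}(π) − (−1)^k B_{k−1}/(k−1), the series t^{k−1}x_k equals (k−2)! + O(t^k).) -/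
open PowerSeries


lemma myderivative_exp : d⁄dX ℚ (PowerSeries.exp ℚ) = PowerSeries.exp ℚ := by
  ext n
  rw [PowerSeries.coeff_derivative, PowerSeries.coeff_exp, PowerSeries.coeff_exp]
  have h : ((n+1).factorial : ℚ) ≠ 0 := by exact_mod_cast (Nat.factorial_pos _).ne'
  have h2 : (n.factorial : ℚ) ≠ 0 := by exact_mod_cast (Nat.factorial_pos _).ne'
  simp only [Algebra.algebraMap_self, RingHom.id_apply]
  field_simp [Nat.factorial_succ]
  push_cast [Nat.factorial_succ]
  ring

lemma myderivative_aeval (f : PowerSeries ℚ) (p : Polynomial ℤ) :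
    d⁄dX ℚ (Polynomial.aeval f p) =
      Polynomial.aeval f (Polynomial.derivative p) * d⁄dX ℚ f := by
  induction p using Polynomial.induction_on with
  | C a => simp [Polynomial.aeval_C]
  | add p q hp hq => simp [hp, hq]; ring
  | monomial n a h =>
      simp only [map_mul, Polynomial.aeval_C, Polynomial.aeval_X_pow,
        Polynomial.derivative_mul, Polynomial.derivative_C, Polynomial.derivative_X_pow,
        map_add, map_pow, Polynomial.aeval_X, map_natCast]
      rw [Derivation.leibniz, Derivation.leibniz_pow]
      simp [smul_eq_mul, nsmul_eq_mul]
      ring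

lemma key_s8 (T : PowerSeries ℚ) (hT : T * (PowerSeries.exp ℚ - 1) = PowerSeries.X) (j : ℕ) :
    T ^ (j+2) * Polynomial.aeval (PowerSeries.exp ℚ - 1) (hPoly (j+1)) =
      ((j : PowerSeries ℚ) + 1) * (T ^ (j+1) * Polynomial.aeval (PowerSeries.exp ℚ - 1) (hPoly j)) -
        X * d⁄dX ℚ (T ^ (j+1) * Polynomial.aeval (PowerSeries.exp ℚ - 1) (hPoly j)) := by
  set E := PowerSeries.exp ℚ with hE
  set A := Polynomial.aeval (E - 1) (hPoly j) with hA
  set B := Polynomial.aeval (E - 1) (Polynomial.derivative (hPoly j)) with hB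
  have hDE : d⁄dX ℚ (E - 1) = E := by
    rw [map_sub, myderivative_exp]; simp [hE]
  have hDA : d⁄dX ℚ A = B * E := by rw [hA, myderivative_aeval, hDE, hB]
  have h1 : d⁄dX ℚ T * (E - 1) + T * E = 1 := by
    have h := congrArg (d⁄dX ℚ) hT
    rw [Derivation.leibniz, hDE, PowerSeries.derivative_X, smul_eq_mul, smul_eq_mul] at h
    linear_combination h
  have hDT : d⁄dX ℚ T * X = T - T^2 * E := by
    linear_combination T * h1 - (d⁄dX ℚ T) * hT
  have hup : Polynomial.aeval (E - 1) (hPoly (j+1)) =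
      E * (((j : PowerSeries ℚ) + 1) * A - (E - 1) * B) := by
    show Polynomial.aeval (E - 1) ((1 + Polynomial.X) *
      ((j + 1 : ℤ) • hPoly j - Polynomial.X * Polynomial.derivative (hPoly j))) = _
    rw [map_mul, map_sub, map_add, map_one, Polynomial.aeval_X, map_mul, Polynomial.aeval_X]
    rw [map_smul, ← hA, ← hB]
    push_cast [zsmul_eq_mul]
    ring
  have hDP : d⁄dX ℚ (T ^ (j+1)) = ((j : PowerSeries ℚ) + 1) * (T ^ j * d⁄dX ℚ T) := by
    rw [Derivation.leibniz_pow]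
    simp [smul_eq_mul, nsmul_eq_mul]
  rw [hup, Derivation.leibniz, hDA, hDP, smul_eq_mul, smul_eq_mul]
  linear_combination (((j : PowerSeries ℚ)+1) * A * T^j) * hDT - T^(j+1) * B * E * hT

lemma coeff_G (T : PowerSeries ℚ) (hT : T * (PowerSeries.exp ℚ - 1) = PowerSeries.X)
    (j : ℕ) (n : ℕ) :
    PowerSeries.coeff n (T ^ (j+1) * Polynomial.aeval (PowerSeries.exp ℚ - 1) (hPoly j)) =
      if n = 0 then (j.factorial : ℚ)
      else (-1)^j * (j.factorial : ℚ) * ((n-1).choose j : ℚ) * bernoulli n / (n.factorial : ℚ) := by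
  induction j generalizing n with
  | zero =>
    have hEne : (PowerSeries.exp ℚ - 1 : PowerSeries ℚ) ≠ 0 := by
      intro h
      have := congrArg (PowerSeries.coeff 1) h
      simp [PowerSeries.coeff_exp] at this
    have hTB : T = bernoulliPowerSeries ℚ :=
      mul_right_cancel₀ hEne (by rw [hT, bernoulliPowerSeries_mul_exp_sub_one])
    show PowerSeries.coeff n (T ^ 1 * Polynomial.aeval _ (1 : Polynomial ℤ)) = _
    rw [map_one, mul_one, pow_one, hTB, bernoulliPowerSeries, PowerSeries.coeff_mk]
    by_cases hn : n = 0
    · simp [hn]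
    · simp [hn]
  | succ j ih =>
    have hkey := key_s8 T hT j
    rw [show j + 1 + 1 = j + 2 from rfl, hkey]
    have hC : ((j : PowerSeries ℚ) + 1) = PowerSeries.C ((j : ℚ) + 1) := by
      rw [map_add, map_one, map_natCast]
    rw [map_sub, hC, PowerSeries.coeff_C_mul]
    rcases n with _ | m
    · rw [PowerSeries.coeff_zero_X_mul, ih 0]
      simp [Nat.factorial_succ]
    · rw [PowerSeries.coeff_succ_X_mul, PowerSeries.coeff_derivative, ih (m+1)]
      simp only [Nat.succ_ne_zero, if_false, Nat.succ_sub_one]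
      rw [Nat.factorial_succ (j)]
      by_cases hmj : j ≤ m
      · have hcast : ((m - j : ℕ) : ℚ) = (m : ℚ) - j := by
          push_cast [Nat.cast_sub hmj]; ring
        have hcs := Nat.choose_succ_right_eq m j
        have hcsq : (m.choose (j+1) : ℚ) * ((j:ℚ)+1) = (m.choose j : ℚ) * ((m:ℚ) - j) := by
          rw [← hcast]; exact_mod_cast hcs
        push_cast
        linear_combination ((-1:ℚ)^j * (j.factorial : ℚ) * bernoulli (m+1) /
          ((m+1).factorial : ℚ)) * hcsq
      · have h1 : m.choose j = 0 := Nat.choose_eq_zero_of_lt (by omega)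
        have h2 : m.choose (j+1) = 0 := Nat.choose_eq_zero_of_lt (by omega)
        simp [h1, h2]

/-- For `k ≥ 2`,
`(t/(e^t-1))^{k-1} h_{k-2}(e^t-1) - (-1)^k (B_{k-1}/(k-1)) t^{k-1}
  = (k-2)! (1 + (-1)^k ∑_{n ≥ k} binom(n-1, k-2) Bₙ tⁿ/n!)`.
Here `T` denotes `t/(e^t-1)`, the unique power series with `T * (e^t-1) = t`. -/
theorem t_pow_xk_expansion (k : ℕ) (hk : 2 ≤ k) (T : PowerSeries ℚ)
    (hT : T * (PowerSeries.exp ℚ - 1) = PowerSeries.X) :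
    T ^ (k - 1) * Polynomial.aeval (PowerSeries.exp ℚ - 1) (hPoly (k - 2)) -
        (PowerSeries.C (R := ℚ)) ((-1) ^ k * _root_.bernoulli (k - 1) / ((k : ℚ) - 1)) *
          (PowerSeries.X : PowerSeries ℚ) ^ (k - 1) =
      PowerSeries.mk (fun n =>
        if n = 0 then ((k - 2).factorial : ℚ)
        else if k ≤ n then
          ((k - 2).factorial : ℚ) * (-1) ^ k * ((n - 1).choose (k - 2) : ℚ) *
            _root_.bernoulli n / (n.factorial : ℚ)
        else 0) := by
  obtain ⟨j, rfl⟩ : ∃ j, k = j + 2 := ⟨k - 2, by omega⟩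
  have h1 : j + 2 - 1 = j + 1 := by omega
  have h2 : j + 2 - 2 = j := by omega
  rw [h1, h2]
  have hsg : ((-1:ℚ)) ^ (j + 2) = (-1) ^ j := by
    rw [pow_add]; ring
  ext n
  rw [map_sub, PowerSeries.coeff_mk, coeff_G T hT j n, PowerSeries.coeff_C_mul,
    PowerSeries.coeff_X_pow]
  rcases eq_or_ne n 0 with rfl | hn0
  · simp
  · simp only [hn0, if_false]
    rcases eq_or_ne n (j + 1) with rfl | hnj
    · have hklt : ¬ (j + 2 ≤ j + 1) := by omega
      simp only [if_pos rfl, if_neg hklt, mul_one]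
      rw [hsg, Nat.add_sub_cancel, Nat.choose_self, Nat.factorial_succ]
      have hf : ((j.factorial : ℚ)) ≠ 0 := by exact_mod_cast (Nat.factorial_pos _).ne'
      have hj1 : ((j:ℚ) + 1) ≠ 0 := by positivity
      have hc : ((j:ℚ) + 2) - 1 = (j:ℚ) + 1 := by ring
      push_cast
      rw [show (j:ℚ) + 2 - 1 = (j:ℚ) + 1 by ring]
      field_simp
      ring
    · rw [if_neg hnj, mul_zero, sub_zero]
      by_cases hkn : j + 2 ≤ n
      · rw [if_pos hkn, hsg]
        ring
      · have : n - 1 < j := by omega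
        rw [if_neg hkn, Nat.choose_eq_zero_of_lt this]
        simp
end

section
/- Let p be a prime and let φ be the ℤ_p-algebra endomorphism of ℤ_p[[X]] determined by substituting X ↦ (1+X)^p − 1. Then for every μ ∈ ℤ_p, the map y ↦ μ·φ(y) − y from the ideal X·ℤ_p[[X]] to itself is surjective: for every z ∈ ℤ_p[[X]] with zero constant term there exists y ∈ ℤ_p[[X]] with zero constant term such that μ·φ(y) − y = z. -/
/-- The endomorphism `φ` of `ℤ_p[[X]]` given by substituting `X ↦ (1+X)^p - 1`
(defined coefficientwise; the sum is finite since `(1+X)^p - 1` has zero constant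
term, so `coeff m (((1+X)^p - 1)^n) = 0` for `n > m`). -/
noncomputable def phiFrob (p : ℕ) [Fact p.Prime] (f : PowerSeries ℤ_[p]) :
    PowerSeries ℤ_[p] :=
  PowerSeries.mk fun m => ∑ n ∈ Finset.range (m + 1),
    PowerSeries.coeff (R := ℤ_[p]) n f *
      PowerSeries.coeff (R := ℤ_[p]) m (((1 + PowerSeries.X : PowerSeries ℤ_[p]) ^ p - 1) ^ n)

noncomputable def seqAux (p : ℕ) [Fact p.Prime] (μ : ℤ_[p]) (z : PowerSeries ℤ_[p]) :
    ℕ → ℤ_[p]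
  | 0 => 0
  | m + 1 => Ring.inverse (μ * (p : ℤ_[p]) ^ (m + 1) - 1) *
      (PowerSeries.coeff (R := ℤ_[p]) (m + 1) z - μ * ∑ n ∈ (Finset.range (m + 1)).attach,
        seqAux p μ z n.1 * PowerSeries.coeff (R := ℤ_[p]) (m + 1)
          (((1 + PowerSeries.X : PowerSeries ℤ_[p]) ^ p - 1) ^ (n.1 : ℕ)))
  decreasing_by exact Finset.mem_range.mp n.2

lemma gfact (p : ℕ) [Fact p.Prime] :
    ((1 + PowerSeries.X : PowerSeries ℤ_[p]) ^ p - 1) =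
      (∑ i ∈ Finset.range p, (1 + PowerSeries.X : PowerSeries ℤ_[p]) ^ i) * PowerSeries.X := by
  have := geom_sum_mul (1 + PowerSeries.X : PowerSeries ℤ_[p]) p
  simpa using this.symm

lemma coeff_g_pow_self (p : ℕ) [Fact p.Prime] (m : ℕ) :
    PowerSeries.coeff (R := ℤ_[p]) m (((1 + PowerSeries.X : PowerSeries ℤ_[p]) ^ p - 1) ^ m)
      = (p : ℤ_[p]) ^ m := by
  rw [gfact, mul_pow]
  have h := PowerSeries.coeff_mul_X_pow
    ((∑ i ∈ Finset.range p, (1 + PowerSeries.X : PowerSeries ℤ_[p]) ^ i) ^ m) m 0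
  rw [zero_add] at h
  rw [h]
  simp [PowerSeries.coeff_zero_eq_constantCoeff, map_pow, map_sum]

lemma unit_fact (p : ℕ) [Fact p.Prime] (μ : ℤ_[p]) (m : ℕ) :
    IsUnit (μ * (p : ℤ_[p]) ^ (m + 1) - 1) := by
  have hnorm : ‖μ * (p : ℤ_[p]) ^ (m + 1)‖ < 1 := by
    calc ‖μ * (p : ℤ_[p]) ^ (m + 1)‖ ≤ ‖μ‖ * ‖(p : ℤ_[p]) ^ (m + 1)‖ := norm_mul_le _ _
    _ ≤ 1 * ‖(p : ℤ_[p])‖ ^ (m + 1) := by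
        gcongr
        · exact μ.norm_le_one
        · exact norm_pow_le' _ (Nat.succ_pos m)
    _ < 1 := by
        rw [one_mul, PadicInt.norm_p]
        have hp : (1 : ℝ) < (p : ℝ) := by
          exact_mod_cast (Fact.out : p.Prime).one_lt
        have : ((p : ℝ))⁻¹ < 1 := by
          rw [inv_lt_one_iff₀]; right; exact hp
        calc ((p:ℝ))⁻¹ ^ (m+1) ≤ ((p:ℝ))⁻¹ ^ 1 := by
              apply pow_le_pow_of_le_one (by positivity) this.le (Nat.one_le_iff_ne_zero.mpr (by omega))
        _ = ((p:ℝ))⁻¹ := pow_one _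
        _ < 1 := this
  have : IsUnit (1 - μ * (p : ℤ_[p]) ^ (m + 1)) := ⟨Units.oneSub _ hnorm, rfl⟩
  have h2 := this.neg
  simpa [neg_sub] using h2

/-- For every `μ ∈ ℤ_p`, the map `y ↦ μ φ(y) - y` is surjective on the ideal
`X ℤ_p[[X]]` of power series with zero constant term. -/
theorem mu_phi_sub_one_surjective (p : ℕ) [Fact p.Prime] (μ : ℤ_[p])
    (z : PowerSeries ℤ_[p]) (hz : PowerSeries.constantCoeff (R := ℤ_[p]) z = 0) :
    ∃ y : PowerSeries ℤ_[p], PowerSeries.constantCoeff (R := ℤ_[p]) y = 0 ∧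
      PowerSeries.C (R := ℤ_[p]) μ * phiFrob p y - y = z := by
  refine ⟨PowerSeries.mk (seqAux p μ z), by simp [seqAux], ?_⟩
  ext m
  rw [map_sub, PowerSeries.coeff_C_mul]
  unfold phiFrob
  rw [PowerSeries.coeff_mk, PowerSeries.coeff_mk]
  cases m with
  | zero =>
    simp only [Finset.range_one, Finset.sum_singleton, PowerSeries.coeff_mk]
    rw [← PowerSeries.coeff_zero_eq_constantCoeff] at hz
    simp [seqAux, hz]
  | succ m =>
    simp only [PowerSeries.coeff_mk]
    rw [Finset.sum_range_succ]
    rw [coeff_g_pow_self]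
    set S := ∑ n ∈ Finset.range (m + 1), seqAux p μ z n *
      PowerSeries.coeff (R := ℤ_[p]) (m + 1)
        (((1 + PowerSeries.X : PowerSeries ℤ_[p]) ^ p - 1) ^ n) with hS
    have hrec : seqAux p μ z (m + 1) =
        Ring.inverse (μ * (p : ℤ_[p]) ^ (m + 1) - 1) *
          (PowerSeries.coeff (R := ℤ_[p]) (m + 1) z - μ * S) := by
      rw [seqAux, hS, ← Finset.sum_attach (Finset.range (m + 1))]
    rw [hrec]
    have hu := unit_fact p μ m
    have hcancel : (μ * (p : ℤ_[p]) ^ (m + 1) - 1) *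
        (Ring.inverse (μ * (p : ℤ_[p]) ^ (m + 1) - 1) *
          (PowerSeries.coeff (R := ℤ_[p]) (m + 1) z - μ * S)) =
        PowerSeries.coeff (R := ℤ_[p]) (m + 1) z - μ * S := by
      rw [← mul_assoc, Ring.mul_inverse_cancel _ hu, one_mul]
    ring_nf
    ring_nf at hcancel
    linear_combination hcancel
end

section
/- Let p ≥ 3 be a prime. For every real number s > 1/(p−1), the infimum over integers n ≥ 2 with B_n ≠ 0 of (padicValRat p (B_n/n!) + n·s) equals the infimum over all integers n ≥ 2 of (padicValRat p (1/(n+1) − 1/(2n)) + n·s). (This expresses the equality of the Gauss valuations of the single function t/(e^t−1) − 1 + t/2 computed in the coordinate t, whose expansion is ∑_{n≥2} B_n t^n/n!, and in the coordinate π = e^t − 1, whose expansion is ∑_{n≥2} (−1)^n (1/(n+1) − 1/(2n)) π^n.) -/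
open PowerSeries Finset

namespace GaussValAux

/-- `π = e^t - 1` as a formal power series over `ℚ`. -/
noncomputable def piS : PowerSeries ℚ := PowerSeries.exp ℚ - 1

lemma coeff_piS (n : ℕ) :
    coeff n piS = if n = 0 then 0 else 1 / (n.factorial : ℚ) := by
  simp only [piS, map_sub, coeff_exp, coeff_one, Algebra.algebraMap_self, RingHom.id_apply]
  rcases eq_or_ne n 0 with h | h <;> simp [h]

lemma constantCoeff_piS : constantCoeff piS = 0 := by
  rw [← coeff_zero_eq_constantCoeff_apply, coeff_piS]; simp

lemma coeff_one_piS : coeff 1 piS = 1 := by rw [coeff_piS]; simp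

lemma exp_eq : PowerSeries.exp ℚ = 1 + piS := by simp [piS]

lemma coeff_piS_pow_of_lt {i k : ℕ} (h : i < k) : coeff i (piS ^ k) = 0 := by
  have hdvd : (X : ℚ⟦X⟧) ^ k ∣ piS ^ k :=
    pow_dvd_pow_of_dvd (X_dvd_iff.2 constantCoeff_piS) k
  exact (X_pow_dvd_iff.1 hdvd) i h

lemma derivative_exp : d⁄dX ℚ (PowerSeries.exp ℚ) = PowerSeries.exp ℚ := by
  ext n
  rw [coeff_derivative, coeff_exp, coeff_exp]
  simp only [Algebra.algebraMap_self, RingHom.id_apply, Nat.factorial_succ, Nat.cast_mul]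
  have h1 : ((n.factorial : ℚ)) ≠ 0 := Nat.cast_ne_zero.2 n.factorial_ne_zero
  have h2 : ((n : ℚ) + 1) ≠ 0 := by positivity
  field_simp
  push_cast; ring

lemma derivative_piS : d⁄dX ℚ piS = PowerSeries.exp ℚ := by
  simp [piS, derivative_exp]

/-- Partial sum of `log(1 + π)`: `∑_{k=1}^{N} (-1)^{k-1} π^k / k`. -/
noncomputable def PS (N : ℕ) : ℚ⟦X⟧ :=
  ∑ k ∈ range N, C (R := ℚ) ((-1) ^ k / (k + 1)) * piS ^ (k + 1)

lemma derivative_PS (N : ℕ) :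
    d⁄dX ℚ (PS N) = (∑ k ∈ range N, (-piS) ^ k) * PowerSeries.exp ℚ := by
  rw [PS, map_sum, Finset.sum_mul]
  refine Finset.sum_congr rfl fun k _ => ?_
  rw [← smul_eq_C_mul, Derivation.map_smul]
  have hpow : d⁄dX ℚ (piS ^ (k + 1)) = (k + 1) • piS ^ k • d⁄dX ℚ piS := by
    simpa using Derivation.leibniz_pow (d⁄dX ℚ) (a := piS) (k + 1)
  rw [hpow, derivative_piS, smul_eq_mul, ← Nat.cast_smul_eq_nsmul ℚ, smul_smul]
  have h2 : ((k : ℚ) + 1) ≠ 0 := by positivity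
  have hc : (-1 : ℚ) ^ k / (k + 1) * ((k + 1 : ℕ) : ℚ) = (-1 : ℚ) ^ k := by
    push_cast; field_simp
  rw [hc, smul_eq_C_mul, neg_pow piS, map_pow, map_neg, map_one, mul_assoc]

lemma derivative_X_sub_PS (N : ℕ) :
    d⁄dX ℚ ((X : ℚ⟦X⟧) - PS N) = (-piS) ^ N := by
  rw [map_sub, derivative_X, derivative_PS, exp_eq]
  have hg : (∑ k ∈ range N, (-piS) ^ k) * (1 + piS) = 1 - (-piS) ^ N := by
    have := geom_sum_mul (-piS) N
    have h1 : (-piS) - 1 = -(1 + piS) := by ring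
    rw [h1] at this
    have := congrArg (fun z => -z) this
    simp only [neg_neg, mul_neg, neg_sub] at this
    linear_combination this
  rw [hg]
  ring

lemma coeff_X_sub_PS {m N : ℕ} (h : m ≤ N) : coeff m ((X : ℚ⟦X⟧) - PS N) = 0 := by
  rcases Nat.eq_zero_or_pos m with hm | hm
  · subst hm
    simp [PS, coeff_X, coeff_C_mul, constantCoeff_piS]
  · obtain ⟨m', rfl⟩ : ∃ m', m = m' + 1 := ⟨m - 1, by omega⟩
    have hd := congrArg (fun f => coeff m' f) (derivative_X_sub_PS N)
    simp only [coeff_derivative] at hd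
    have hm' : m' < N := by omega
    have hz : coeff m' ((-piS) ^ N) = 0 := by
      have hdvd : (X : ℚ⟦X⟧) ^ N ∣ (-piS) ^ N :=
        pow_dvd_pow_of_dvd (X_dvd_iff.2 (by simp [constantCoeff_piS])) N
      exact X_pow_dvd_iff.1 hdvd m' hm'
    rw [hz] at hd
    have hne : ((m' : ℚ) + 1) ≠ 0 := by positivity
    have := mul_eq_zero.1 hd
    rcases this with h | h
    · simpa using h
    · exact absurd h (by push_cast; exact hne)

lemma coeff_PS {m N : ℕ} (h : m ≤ N) :
    coeff m (PS N) = if m = 1 then 1 else 0 := by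
  have h0 := coeff_X_sub_PS h
  rw [map_sub, sub_eq_zero] at h0
  rw [← h0, coeff_X]

lemma order_piS : piS.order = 1 := by
  rw [show (1 : ℕ∞) = ((1 : ℕ) : ℕ∞) from rfl, order_eq_nat]
  constructor
  · rw [coeff_one_piS]; exact one_ne_zero
  · intro i hi
    interval_cases i
    · rw [coeff_piS]; simp

/-- The π-coefficients `c k = (-1)^k (1/(k+1) - 1/(2k))`. -/
noncomputable def cc (k : ℕ) : ℚ := (-1) ^ k * (1 / ((k : ℚ) + 1) - 1 / (2 * (k : ℚ)))

/-- Partial sums of the π-expansion of `t/(e^t-1) - 1 + t/2`. -/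
noncomputable def W (n : ℕ) : ℚ⟦X⟧ := ∑ k ∈ range (n - 1), C (R := ℚ) (cc (k + 2)) * piS ^ (k + 2)

/-- The power series `t/(e^t-1) - 1 + t/2`. -/
noncomputable def G : ℚ⟦X⟧ := bernoulliPowerSeries ℚ - 1 + C (R := ℚ) (1 / 2) * X

lemma G_mul : G * piS = X - piS + C (R := ℚ) (1 / 2) * X * piS := by
  have hb : bernoulliPowerSeries ℚ * piS = X := by
    rw [piS]; exact bernoulliPowerSeries_mul_exp_sub_one ℚ
  rw [G]
  ring_nf
  rw [hb]
  ring

lemma W_mul (m : ℕ) :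
    W (m + 2) * piS = PS (m + 3) + C (R := ℚ) (1 / 2) * PS (m + 2) * piS - piS := by
  have hW : W (m + 2) * piS = ∑ k ∈ range (m + 1), C (R := ℚ) (cc (k + 2)) * piS ^ (k + 3) := by
    rw [W]
    show (∑ k ∈ range (m + 1), C (R := ℚ) (cc (k + 2)) * piS ^ (k + 2)) * piS = _
    rw [Finset.sum_mul]
    exact sum_congr rfl fun k _ => by ring
  have hPS3 : PS (m + 3) =
      (∑ k ∈ range (m + 1), C (R := ℚ) ((-1) ^ k / ((k : ℚ) + 3)) * piS ^ (k + 3))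
        + (piS - C (R := ℚ) (1 / 2) * piS ^ 2) := by
    rw [PS, Finset.sum_range_succ', Finset.sum_range_succ', add_assoc]
    congr 1
    · refine sum_congr rfl fun k _ => ?_
      have hc : ((-1 : ℚ)) ^ (k + 1 + 1) / ((((k + 1 + 1 : ℕ)) : ℚ) + 1)
          = (-1 : ℚ) ^ k / ((k : ℚ) + 3) := by push_cast; ring
      rw [hc]
    · have hc : ((-1 : ℚ)) ^ (0 + 1) / ((((0 + 1 : ℕ)) : ℚ) + 1) = -(1 / 2) := by norm_num
      rw [hc]
      have hc2 : ((-1 : ℚ)) ^ 0 / (((0 : ℕ) : ℚ) + 1) = 1 := by norm_num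
      rw [hc2]
      have h2 : (0 + 1 + 1 : ℕ) = 2 := rfl
      rw [h2, map_neg, map_one]
      ring
  have hhalf : C (R := ℚ) (1 / 2) * PS (m + 2) * piS =
      (∑ k ∈ range (m + 1), C (R := ℚ) ((-1) ^ (k + 1) / (2 * ((k : ℚ) + 2))) * piS ^ (k + 3))
        + C (R := ℚ) (1 / 2) * piS ^ 2 := by
    rw [PS, Finset.mul_sum, Finset.sum_mul, Finset.sum_range_succ']
    congr 1
    · refine sum_congr rfl fun k _ => ?_
      have hc : ((-1 : ℚ)) ^ (k + 1) / (2 * ((k : ℚ) + 2))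
          = (1 / 2) * ((-1 : ℚ) ^ (k + 1) / (((k + 1 : ℕ) : ℚ) + 1)) := by
        have h2 : ((k : ℚ) + 2) ≠ 0 := by positivity
        push_cast
        field_simp
        ring
      rw [hc, map_mul]
      ring
    · have hc : ((-1 : ℚ)) ^ 0 / (((0 : ℕ) : ℚ) + 1) = 1 := by norm_num
      rw [hc, map_one]
      ring
  rw [hW, hPS3, hhalf]
  have hsum : ∑ k ∈ range (m + 1), C (R := ℚ) (cc (k + 2)) * piS ^ (k + 3) =
      (∑ k ∈ range (m + 1), C (R := ℚ) ((-1) ^ k / ((k : ℚ) + 3)) * piS ^ (k + 3))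
        + ∑ k ∈ range (m + 1), C (R := ℚ) ((-1) ^ (k + 1) / (2 * ((k : ℚ) + 2))) * piS ^ (k + 3) := by
    rw [← sum_add_distrib]
    refine sum_congr rfl fun k _ => ?_
    rw [← add_mul, ← map_add]
    congr 2
    rw [cc]
    push_cast
    have h1 : ((k : ℚ) + 2) + 1 = (k : ℚ) + 3 := by ring
    have h2 : ((k : ℚ) + 2) ≠ 0 := by positivity
    have h3 : ((k : ℚ) + 3) ≠ 0 := by positivity
    field_simp
    ring
  rw [hsum]
  ring

lemma coeff_G_sub_W (m : ℕ) {j : ℕ} (hj : j ≤ m + 2) : coeff j (G - W (m + 2)) = 0 := by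
  have hkey : (G - W (m + 2)) * piS =
      (X - PS (m + 3)) + C (R := ℚ) (1 / 2) * ((X - PS (m + 2)) * piS) := by
    rw [sub_mul, G_mul, W_mul]
    ring
  have h1 : ∀ i : ℕ, i < m + 4 → coeff i ((G - W (m + 2)) * piS) = 0 := by
    intro i hi
    rw [hkey, map_add, coeff_X_sub_PS (by omega), coeff_C_mul, coeff_mul]
    rw [Finset.sum_eq_zero, mul_zero, add_zero]
    intro ab hab
    rw [Finset.HasAntidiagonal.mem_antidiagonal] at hab
    rcases le_or_gt ab.1 (m + 2) with hle | hgt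
    · rw [coeff_X_sub_PS hle, zero_mul]
    · have hb : ab.2 = 0 := by omega
      rw [hb, coeff_zero_eq_constantCoeff_apply, constantCoeff_piS, mul_zero]
  have h2 : ((m + 4 : ℕ) : ℕ∞) ≤ ((G - W (m + 2)) * piS).order :=
    nat_le_order _ _ h1
  rw [order_mul, order_piS] at h2
  have h3 : ((m + 3 : ℕ) : ℕ∞) ≤ (G - W (m + 2)).order := by
    have : ((m + 3 : ℕ) : ℕ∞) + 1 ≤ (G - W (m + 2)).order + 1 := by
      refine le_trans (le_of_eq ?_) h2
      norm_cast
    exact (WithTop.add_le_add_iff_right (by simp : (1 : ℕ∞) ≠ ⊤)).1 this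
  exact coeff_of_lt_order j (lt_of_lt_of_le (by exact_mod_cast (by omega : j < m + 3)) h3)

lemma coeff_piS_pow_self (k : ℕ) : coeff k (piS ^ k) = 1 := by
  induction k with
  | zero => simp
  | succ k ih =>
    rw [pow_succ, coeff_mul]
    rw [Finset.sum_eq_single (k, 1)]
    · rw [ih, coeff_one_piS, one_mul]
    · intro ab hab hne
      rw [Finset.HasAntidiagonal.mem_antidiagonal] at hab
      rcases lt_or_ge ab.1 k with h | h
      · rw [coeff_piS_pow_of_lt h, zero_mul]
      · have : ab.1 = k + 1 := by
          rcases Nat.eq_or_lt_of_le h with h' | h'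
          · exact absurd (Prod.ext h'.symm (by omega)) hne
          · omega
        rw [this] at hab ⊢
        have : ab.2 = 0 := by omega
        rw [this, coeff_zero_eq_constantCoeff_apply, constantCoeff_piS, mul_zero]
    · intro h
      exact absurd (by simp : (k, 1) ∈ Finset.HasAntidiagonal.antidiagonal (k + 1)) h

/-- The master identity: `Bₙ/n! = ∑_{k=2}^n cc k · coeff n (π^k)` for `n ≥ 2`. -/
lemma bernoulli_eq_sum (n : ℕ) (hn : 2 ≤ n) :
    _root_.bernoulli n / (n.factorial : ℚ) =
      ∑ k ∈ range (n - 1), cc (k + 2) * coeff n (piS ^ (k + 2)) := by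
  obtain ⟨m, rfl⟩ : ∃ m, n = m + 2 := ⟨n - 2, by omega⟩
  have h := coeff_G_sub_W m (le_refl (m + 2))
  rw [map_sub, sub_eq_zero] at h
  have hG : coeff (m + 2) G = _root_.bernoulli (m + 2) / ((m + 2).factorial : ℚ) := by
    rw [G, map_add, map_sub]
    rw [bernoulliPowerSeries]
    simp [coeff_one, coeff_X, coeff_C_mul]
  have hW : coeff (m + 2) (W (m + 2)) =
      ∑ k ∈ range (m + 1), cc (k + 2) * coeff (m + 2) (piS ^ (k + 2)) := by
    rw [W, map_sum]
    exact sum_congr rfl fun k _ => coeff_C_mul _ _ _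
  rw [← hG, h, hW]
  norm_num

section Valuation

variable (p : ℕ) [Fact p.Prime]

/-- `x = 0` or `v_p(x) ≥ m`. -/
def Vge (m : ℝ) (x : ℚ) : Prop := x = 0 ∨ m ≤ (padicValRat p x : ℝ)

variable {p}

lemma Vge_mono {m m' : ℝ} (h : m' ≤ m) {x : ℚ} (hx : Vge p m x) : Vge p m' x :=
  hx.imp id fun h' => le_trans h h'

lemma Vge_zero (m : ℝ) : Vge p m (0 : ℚ) := Or.inl rfl

lemma Vge_neg {m : ℝ} {x : ℚ} (hx : Vge p m x) : Vge p m (-x) := by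
  rcases hx with h | h
  · exact Or.inl (by rw [h, neg_zero])
  · exact Or.inr (by rwa [padicValRat.neg])

lemma Vge_add {m : ℝ} {x y : ℚ} (hx : Vge p m x) (hy : Vge p m y) : Vge p m (x + y) := by
  rcases hx with hx | hx
  · rwa [hx, zero_add]
  rcases hy with hy | hy
  · rw [hy, add_zero]; exact Or.inr hx
  rcases eq_or_ne (x + y) 0 with h0 | h0
  · exact Or.inl h0
  refine Or.inr ?_
  have hmin : ((min (padicValRat p x) (padicValRat p y) : ℤ) : ℝ)
      ≤ (padicValRat p (x + y) : ℝ) := by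
    exact_mod_cast padicValRat.min_le_padicValRat_add (p := p) h0
  refine le_trans ?_ hmin
  push_cast
  exact le_min hx hy

lemma Vge_sub {m : ℝ} {x y : ℚ} (hx : Vge p m x) (hy : Vge p m y) : Vge p m (x - y) := by
  rw [sub_eq_add_neg]; exact Vge_add hx (Vge_neg hy)

lemma Vge_sum {ι : Type*} {m : ℝ} {t : Finset ι} {f : ι → ℚ}
    (h : ∀ i ∈ t, Vge p m (f i)) : Vge p m (∑ i ∈ t, f i) := by
  classical
  induction t using Finset.induction_on with
  | empty => simpa using Vge_zero m
  | insert _ _ hnotmem ih =>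
    rw [Finset.sum_insert hnotmem]
    exact Vge_add (h _ (Finset.mem_insert_self _ _))
      (ih fun i hi => h i (Finset.mem_insert_of_mem hi))

lemma Vge_mul {a b : ℝ} {x y : ℚ} (hx : Vge p a x) (hy : Vge p b y) : Vge p (a + b) (x * y) := by
  rcases hx with hx | hx
  · exact Or.inl (by rw [hx, zero_mul])
  rcases hy with hy | hy
  · exact Or.inl (by rw [hy, mul_zero])
  rcases eq_or_ne x 0 with rfl | hx0
  · exact Or.inl (zero_mul y)
  rcases eq_or_ne y 0 with rfl | hy0
  · exact Or.inl (mul_zero x)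
  refine Or.inr ?_
  rw [padicValRat.mul hx0 hy0]
  push_cast
  exact add_le_add hx hy

lemma digits_sum_pos {j : ℕ} (hj : j ≠ 0) : 1 ≤ (Nat.digits p j).sum := by
  have hne := (Nat.digits_ne_nil_iff_ne_zero (b := p)).2 hj
  have hlast := Nat.getLast_digit_ne_zero p hj
  have hmem : (Nat.digits p j).getLast hne ∈ Nat.digits p j := List.getLast_mem hne
  calc 1 ≤ (Nat.digits p j).getLast hne := Nat.one_le_iff_ne_zero.2 hlast
    _ ≤ (Nat.digits p j).sum := List.single_le_sum (fun x _ => Nat.zero_le x) _ hmem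

lemma factorial_val_le {j : ℕ} (hj : 1 ≤ j) :
    (padicValNat p j.factorial : ℝ) * ((p : ℝ) - 1) ≤ (j : ℝ) - 1 := by
  have hp2 : 2 ≤ p := (Fact.out : p.Prime).two_le
  have hleg := sub_one_mul_padicValNat_factorial (p := p) j
  have hds : 1 ≤ (Nat.digits p j).sum := digits_sum_pos (by omega)
  have hsum_le : (Nat.digits p j).sum ≤ j := Nat.digit_sum_le p j
  have hnat : (p - 1) * padicValNat p j.factorial ≤ j - 1 := by omega
  have := (Nat.cast_le (α := ℝ)).2 hnat
  push_cast [Nat.cast_sub (by omega : 1 ≤ p), Nat.cast_sub hj] at this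
  linarith

lemma val_nat_le {m : ℕ} (hm : 1 ≤ m) :
    (padicValNat p m : ℝ) * ((p : ℝ) - 1) ≤ (m : ℝ) - 1 := by
  have hp2 : 2 ≤ p := (Fact.out : p.Prime).two_le
  set v := padicValNat p m with hv
  have hdvd : p ^ v ∣ m := pow_padicValNat_dvd
  have hle : p ^ v ≤ m := Nat.le_of_dvd (by omega) hdvd
  have hp1 : (1 : ℝ) ≤ (p : ℝ) := by exact_mod_cast (by omega : 1 ≤ p)
  have h1 : 1 + (v : ℝ) * ((p : ℝ) - 1) ≤ ((p : ℝ)) ^ v := by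
    have h := one_add_mul_le_pow (a := (p : ℝ) - 1) (by linarith) v
    have he : (1 + ((p : ℝ) - 1)) = (p : ℝ) := by ring
    rw [he] at h
    linarith [h]
  have h2 : ((p : ℝ)) ^ v ≤ (m : ℝ) := by exact_mod_cast hle
  linarith

lemma valrat_nat_le {m : ℕ} (hm : 1 ≤ m) (hpR : (2 : ℝ) ≤ (p : ℝ) - 1) :
    ((padicValRat p ((m : ℚ)) : ℝ)) ≤ ((m : ℝ) - 1) / ((p : ℝ) - 1) := by
  have h := val_nat_le (p := p) hm
  have he : ((padicValRat p ((m : ℚ))) : ℝ) = (padicValNat p m : ℝ) := by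
    rw [padicValRat.of_nat, Int.cast_natCast]
  rw [le_div_iff₀ (by linarith : (0:ℝ) < (p : ℝ) - 1), he]
  linarith

lemma valrat_factorial_le {j : ℕ} (hj : 1 ≤ j) (hpR : (2 : ℝ) ≤ (p : ℝ) - 1) :
    ((padicValRat p ((j.factorial : ℚ)) : ℝ)) ≤ ((j : ℝ) - 1) / ((p : ℝ) - 1) := by
  have h := factorial_val_le (p := p) hj
  have he : ((padicValRat p ((j.factorial : ℚ))) : ℝ) = (padicValNat p j.factorial : ℝ) := by
    rw [padicValRat.of_nat, Int.cast_natCast]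
  rw [le_div_iff₀ (by linarith : (0:ℝ) < (p : ℝ) - 1), he]
  linarith

/-- Gauss-valuation lower bound: every coefficient satisfies `v_p(f_n) + n s ≥ a`. -/
def Gv (p : ℕ) (s a : ℝ) (f : ℚ⟦X⟧) : Prop := ∀ n : ℕ, Vge p (a - n * s) (coeff n f)

lemma Gv_of_eq {s a a' : ℝ} {f : ℚ⟦X⟧} (h : a' = a) (hf : Gv p s a f) : Gv p s a' f :=
  fun n => Vge_mono (by rw [h]) (hf n)

lemma Gv_mul {s a b : ℝ} {f g : ℚ⟦X⟧} (hf : Gv p s a f) (hg : Gv p s b g) :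
    Gv p s (a + b) (f * g) := by
  intro n
  rw [coeff_mul]
  refine Vge_sum fun ij hij => ?_
  rw [Finset.HasAntidiagonal.mem_antidiagonal] at hij
  refine Vge_mono (le_of_eq ?_) (Vge_mul (hf ij.1) (hg ij.2))
  rw [← hij]
  push_cast
  ring

lemma Gv_one {s : ℝ} : Gv p s 0 1 := by
  intro n
  rcases eq_or_ne n 0 with rfl | h
  · refine Or.inr ?_
    rw [coeff_one, if_pos rfl, padicValRat.one]
    simp
  · rw [coeff_one, if_neg h]
    exact Vge_zero _

lemma Gv_piS (hp3 : 3 ≤ p) {s : ℝ} (hs : 1 / ((p : ℝ) - 1) < s) : Gv p s s piS := by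
  intro n
  rcases eq_or_ne n 0 with rfl | h
  · rw [coeff_piS, if_pos rfl]
    exact Vge_zero _
  · rw [coeff_piS, if_neg h]
    refine Or.inr ?_
    rw [one_div, padicValRat.inv, Int.cast_neg]
    have hpR : (2 : ℝ) ≤ (p : ℝ) - 1 := by
      have : (3 : ℝ) ≤ (p : ℝ) := by exact_mod_cast hp3
      linarith
    have hfac := valrat_factorial_le (p := p) (by omega : 1 ≤ n) hpR
    have hs1 : 1 < s * ((p : ℝ) - 1) := by
      rw [div_lt_iff₀ (by linarith)] at hs
      linarith
    have hn1 : (1 : ℝ) ≤ (n : ℝ) := by exact_mod_cast (by omega : 1 ≤ n)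
    have h2 : ((n : ℝ) - 1) / ((p : ℝ) - 1) ≤ ((n : ℝ) - 1) * s := by
      rw [div_le_iff₀ (by linarith)]
      nlinarith
    linarith

lemma Gv_pow (hp3 : 3 ≤ p) {s : ℝ} (hs : 1 / ((p : ℝ) - 1) < s) (k : ℕ) :
    Gv p s ((k : ℝ) * s) (piS ^ k) := by
  induction k with
  | zero => simpa using Gv_one
  | succ k ih =>
    rw [pow_succ]
    refine Gv_of_eq ?_ (Gv_mul ih (Gv_piS hp3 hs))
    push_cast
    ring

end Valuation

end GaussValAux

open GaussValAux in
/-- For an odd prime `p` and real `s > 1/(p-1)`, the infimum over `n ≥ 2` with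
`Bₙ ≠ 0` of `v_p(Bₙ/n!) + n s` equals the infimum over all `n ≥ 2` of
`v_p(1/(n+1) - 1/(2n)) + n s`: the Gauss valuation of `t/(e^t-1) - 1 + t/2` is the
same in the coordinates `t` and `π = e^t - 1`. -/
theorem gauss_valuation_coordinate_change (p : ℕ) [Fact p.Prime] (hp : 3 ≤ p)
    (s : ℝ) (hs : 1 / ((p : ℝ) - 1) < s) :
    sInf {x : ℝ | ∃ n : ℕ, 2 ≤ n ∧ _root_.bernoulli n ≠ 0 ∧
        x = (padicValRat p (_root_.bernoulli n / (n.factorial : ℚ)) : ℝ) + n * s} =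
      sInf {x : ℝ | ∃ n : ℕ, 2 ≤ n ∧
        x = (padicValRat p (1 / ((n : ℚ) + 1) - 1 / (2 * (n : ℚ))) : ℝ) + n * s} := by
  classical
  set SL := {x : ℝ | ∃ n : ℕ, 2 ≤ n ∧ _root_.bernoulli n ≠ 0 ∧
      x = (padicValRat p (_root_.bernoulli n / (n.factorial : ℚ)) : ℝ) + n * s} with hSLdef
  set SR := {x : ℝ | ∃ n : ℕ, 2 ≤ n ∧
      x = (padicValRat p (1 / ((n : ℚ) + 1) - 1 / (2 * (n : ℚ))) : ℝ) + n * s} with hSRdef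
  have hpR : (2 : ℝ) ≤ (p : ℝ) - 1 := by
    have : (3 : ℝ) ≤ (p : ℝ) := by exact_mod_cast hp
    linarith
  have hs1 : 1 < s * ((p : ℝ) - 1) := by
    rw [div_lt_iff₀ (by linarith)] at hs
    linarith
  have hspos : 0 < s := by nlinarith
  -- the coefficients 1/(k+1) - 1/(2k) are nonzero for k ≥ 2
  have cne : ∀ k : ℕ, 2 ≤ k → (1 / ((k : ℚ) + 1) - 1 / (2 * (k : ℚ))) ≠ 0 := by
    intro k hk h
    rw [sub_eq_zero] at h
    have hk1 : ((k : ℚ) + 1) ≠ 0 := by positivity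
    have hk2 : (2 * (k : ℚ)) ≠ 0 := by
      have : (0 : ℚ) < (k : ℚ) := by exact_mod_cast (by omega : 0 < k)
      positivity
    rw [div_eq_div_iff hk1 hk2] at h
    have : (k : ℚ) = 1 := by linarith
    have : k = 1 := by exact_mod_cast this
    omega
  have hccne : ∀ k : ℕ, 2 ≤ k → cc k ≠ 0 := by
    intro k hk
    rw [cc]
    exact mul_ne_zero (pow_ne_zero _ (by norm_num)) (cne k hk)
  have hvcc : ∀ k : ℕ, padicValRat p (cc k) =
      padicValRat p (1 / ((k : ℚ) + 1) - 1 / (2 * (k : ℚ))) := by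
    intro k
    rw [cc]
    rcases Nat.even_or_odd k with he | ho
    · rw [he.neg_one_pow, one_mul]
    · rw [ho.neg_one_pow, neg_one_mul, padicValRat.neg]
  have hp2 : ¬ (p ∣ 2) := by
    intro h
    have := Nat.le_of_dvd (by norm_num) h
    omega
  -- valuation lower bound for the RHS coefficients
  have hcoeffval : ∀ k : ℕ, 2 ≤ k →
      -((k : ℝ) / ((p : ℝ) - 1)) ≤ (padicValRat p (1 / ((k : ℚ) + 1) - 1 / (2 * (k : ℚ))) : ℝ) := by
    intro k hk
    have hVge : Vge p (-((k : ℝ) / ((p : ℝ) - 1))) (1 / ((k : ℚ) + 1) - 1 / (2 * (k : ℚ))) := by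
      refine Vge_sub ?_ ?_
      · refine Or.inr ?_
        have hcast : ((k : ℚ) + 1) = (((k + 1 : ℕ) : ℚ)) := by push_cast; ring
        rw [hcast, one_div, padicValRat.inv, Int.cast_neg]
        have hv := valrat_nat_le (p := p) (m := k + 1) (by omega) hpR
        have : ((k + 1 : ℕ) : ℝ) - 1 = (k : ℝ) := by push_cast; ring
        rw [this] at hv
        linarith
      · refine Or.inr ?_
        have hcast : (2 * (k : ℚ)) = (((2 * k : ℕ) : ℚ)) := by push_cast; ring
        rw [hcast, one_div, padicValRat.inv, Int.cast_neg]
        have hmul : padicValNat p (2 * k) = padicValNat p k := by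
          rw [padicValNat.mul (by norm_num) (by omega), padicValNat.eq_zero_of_not_dvd hp2,
            zero_add]
        have he2 : ((padicValRat p (((2 * k : ℕ)) : ℚ)) : ℝ) = (padicValNat p k : ℝ) := by
          rw [padicValRat.of_nat, hmul, Int.cast_natCast]
        rw [he2]
        have hb := val_nat_le (p := p) (m := k) (by omega)
        have hpos : (0 : ℝ) < (p : ℝ) - 1 := by linarith
        rw [neg_le_neg_iff, le_div_iff₀ hpos]
        linarith
    rcases hVge with h0 | h0
    · exact absurd h0 (cne k hk)
    · exact h0
  have hSRnonneg : ∀ x ∈ SR, (0 : ℝ) ≤ x := by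
    rintro x ⟨k, hk, rfl⟩
    have h1 := hcoeffval k hk
    have hk0 : (2 : ℝ) ≤ (k : ℝ) := by exact_mod_cast hk
    have : (k : ℝ) / ((p : ℝ) - 1) ≤ (k : ℝ) * s := by
      rw [div_le_iff₀ (by linarith)]
      nlinarith
    linarith
  have hbddR : BddBelow SR := ⟨0, fun x hx => hSRnonneg x hx⟩
  have hneR : SR.Nonempty := ⟨_, 2, le_refl 2, rfl⟩
  have hb2 : _root_.bernoulli 2 ≠ 0 := by
    rw [bernoulli_eq_bernoulli'_of_ne_one (by norm_num), bernoulli'_two]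
    norm_num
  have hneL : SL.Nonempty := ⟨_, 2, le_refl 2, hb2, rfl⟩
  -- the coefficient estimate for powers of π
  have hE : ∀ n k : ℕ, Vge p ((k : ℝ) * s - (n : ℝ) * s) (coeff n (piS ^ k)) :=
    fun n k => Gv_pow hp hs k n
  -- Step 1 : every element of SL is ≥ sInf SR
  have step1 : ∀ x ∈ SL, sInf SR ≤ x := by
    rintro x ⟨n, hn, hbn, rfl⟩
    have hbne : _root_.bernoulli n / (n.factorial : ℚ) ≠ 0 :=
      div_ne_zero hbn (Nat.cast_ne_zero.2 n.factorial_ne_zero)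
    have hv : Vge p (sInf SR - (n : ℝ) * s) (_root_.bernoulli n / (n.factorial : ℚ)) := by
      rw [bernoulli_eq_sum n hn]
      refine Vge_sum fun k _ => ?_
      have hmem : (padicValRat p (1 / (((k + 2 : ℕ) : ℚ) + 1) - 1 / (2 * ((k + 2 : ℕ) : ℚ))) : ℝ)
          + ((k + 2 : ℕ) : ℝ) * s ∈ SR := ⟨k + 2, by omega, rfl⟩
      have hle := csInf_le hbddR hmem
      have hcc : Vge p (sInf SR - ((k + 2 : ℕ) : ℝ) * s) (cc (k + 2)) := by
        refine Or.inr ?_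
        rw [hvcc]
        linarith
      refine Vge_mono (le_of_eq ?_) (Vge_mul hcc (hE n (k + 2)))
      ring
    rcases hv with h0 | h0
    · exact absurd h0 hbne
    · linarith
  have hL_ge : sInf SR ≤ sInf SL := le_csInf hneL step1
  have hbddL : BddBelow SL := ⟨sInf SR, step1⟩
  -- Step 2 : every element of SR is ≥ sInf SL, by strong induction
  have step2 : ∀ k : ℕ, 2 ≤ k →
      sInf SL ≤ (padicValRat p (1 / ((k : ℚ) + 1) - 1 / (2 * (k : ℚ))) : ℝ) + (k : ℝ) * s := by
    intro k
    induction k using Nat.strong_induction_on with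
    | _ k ih =>
      intro hk2
      obtain ⟨m, rfl⟩ : ∃ m, k = m + 2 := ⟨k - 2, by omega⟩
      have hid := bernoulli_eq_sum (m + 2) (by omega)
      rw [show (m + 2 - 1) = m + 1 from rfl, Finset.sum_range_succ, coeff_piS_pow_self,
        mul_one] at hid
      have hcceq : cc (m + 2) = _root_.bernoulli (m + 2) / ((m + 2).factorial : ℚ)
          - ∑ j ∈ range m, cc (j + 2) * coeff (m + 2) (piS ^ (j + 2)) := by
        rw [hid]; ring
      have hccv : Vge p (sInf SL - ((m + 2 : ℕ) : ℝ) * s) (cc (m + 2)) := by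
        rw [hcceq]
        refine Vge_sub ?_ (Vge_sum fun j hj => ?_)
        · rcases eq_or_ne (_root_.bernoulli (m + 2)) 0 with hb0 | hb0
          · rw [hb0, zero_div]
            exact Vge_zero _
          · refine Or.inr ?_
            have hmem : (padicValRat p (_root_.bernoulli (m + 2) / (((m + 2 : ℕ)).factorial : ℚ)) : ℝ)
                + ((m + 2 : ℕ) : ℝ) * s ∈ SL := ⟨m + 2, by omega, hb0, rfl⟩
            have := csInf_le hbddL hmem
            linarith
        · rw [Finset.mem_range] at hj
          have hih := ih (j + 2) (by omega) (by omega)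
          have hcc : Vge p (sInf SL - ((j + 2 : ℕ) : ℝ) * s) (cc (j + 2)) := by
            refine Or.inr ?_
            rw [hvcc]
            push_cast at hih ⊢
            linarith
          refine Vge_mono (le_of_eq ?_) (Vge_mul hcc (hE (m + 2) (j + 2)))
          ring
      rcases hccv with h0 | h0
      · exact absurd h0 (hccne (m + 2) (by omega))
      · rw [hvcc] at h0
        push_cast at h0 ⊢
        linarith
  have hR_ge : sInf SL ≤ sInf SR := by
    refine le_csInf hneR ?_
    rintro x ⟨k, hk, rfl⟩
    exact step2 k hk
  linarith
end
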